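/- arXiv:1905.07780 — 6 statements merged into one kernel-verified Lean document; each statement's English description precedes it below -/
import Mathlib

section
/- Let f : {0,1}^n → {0,1} be any Boolean function, let U_n be the uniform distribution on {0,1}^n, and for i ∈ [n] let U^{[i]} be the uniform distribution on {x ∈ {0,1}^n : x_i = 1}. Then E_{i ← [n]}[ ‖f(U_n) − f(U^{[i]})‖ ] ≤ O(1/√n), where f(D) denotes the pushforward distribution of D under f. Concretely, E_{i←[n]} |Pr_{x∼U_n}[f(x)=1] − Pr_{x∼U^{[i]}}[f(x)=1]| ≤ 2/√n. -/
open Finset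


noncomputable def χ {n : ℕ} (i : Fin n) (x : Fin n → Bool) : ℝ := if x i then -1 else 1

lemma chi_sq {n : ℕ} (i : Fin n) (x : Fin n → Bool) : χ i x * χ i x = 1 := by
  unfold χ; by_cases h : x i <;> simp [h]

lemma orth {n : ℕ} (i j : Fin n) :
    ∑ x : Fin n → Bool, χ i x * χ j x = if i = j then (2:ℝ)^n else 0 := by
  by_cases h : i = j
  · subst h
    simp [chi_sq]
  · simp only [h, if_false]
    refine Finset.sum_involution (fun x _ => Function.update x i (!(x i))) ?_ ?_
      (fun x _ => Finset.mem_univ _) ?_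
    · intro x _
      have h1 : χ i (Function.update x i (!(x i))) = - χ i x := by
        unfold χ; by_cases hx : x i <;> simp [hx]
      have h2 : χ j (Function.update x i (!(x i))) = χ j x := by
        unfold χ; rw [Function.update_of_ne (Ne.symm h)]
      rw [h1, h2]; ring
    · intro x _ _ hc
      have := congrFun hc i
      simp at this
    · intro x _
      funext k
      by_cases hk : k = i
      · subst hk; simp
      · simp [Function.update_of_ne hk]

lemma bessel {n : ℕ} (g : (Fin n → Bool) → ℝ) (hg : ∀ x, g x ^ 2 ≤ 1)
    (a : Fin n → ℝ) (ha : ∀ i, ∑ x : Fin n → Bool, g x * χ i x = a i * 2 ^ n) :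
    ∑ i : Fin n, (a i) ^ 2 ≤ 1 := by
  have card2 : (Finset.univ : Finset (Fin n → Bool)).card = 2 ^ n := by simp
  have e1 : ∑ x : Fin n → Bool, g x * (∑ i : Fin n, a i * χ i x)
      = 2 ^ n * ∑ i : Fin n, a i ^ 2 := by
    simp_rw [Finset.mul_sum]
    rw [Finset.sum_comm]
    refine Finset.sum_congr rfl fun i _ => ?_
    have : ∑ x : Fin n → Bool, g x * (a i * χ i x) = a i * ∑ x : Fin n → Bool, g x * χ i x := by
      rw [Finset.mul_sum]; refine Finset.sum_congr rfl fun x _ => by ring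
    rw [this, ha i]; ring
  have e2 : ∑ x : Fin n → Bool, (∑ i : Fin n, a i * χ i x) ^ 2
      = 2 ^ n * ∑ i : Fin n, a i ^ 2 := by
    have step : ∀ x : Fin n → Bool, (∑ i : Fin n, a i * χ i x) ^ 2
        = ∑ i : Fin n, ∑ j : Fin n, (a i * a j) * (χ i x * χ j x) := by
      intro x
      rw [sq, Finset.sum_mul_sum]
      exact Finset.sum_congr rfl fun i _ => Finset.sum_congr rfl fun j _ => by ring
    simp_rw [step]
    rw [Finset.sum_comm]
    rw [Finset.mul_sum]
    refine Finset.sum_congr rfl fun i _ => ?_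
    rw [Finset.sum_comm]
    have : ∀ j : Fin n, ∑ x : Fin n → Bool, (a i * a j) * (χ i x * χ j x)
        = (a i * a j) * (if i = j then (2:ℝ)^n else 0) := by
      intro j
      rw [← Finset.mul_sum, orth]
    simp_rw [this]
    simp [Finset.sum_ite_eq]
    ring
  have h0 : (0:ℝ) ≤ ∑ x : Fin n → Bool, (g x - ∑ i : Fin n, a i * χ i x) ^ 2 :=
    Finset.sum_nonneg fun x _ => sq_nonneg _
  have expand : ∑ x : Fin n → Bool, (g x - ∑ i : Fin n, a i * χ i x) ^ 2
      = (∑ x : Fin n → Bool, g x ^ 2) - 2 ^ n * ∑ i : Fin n, a i ^ 2 := by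
    have : ∀ x : Fin n → Bool, (g x - ∑ i : Fin n, a i * χ i x) ^ 2
        = g x ^ 2 - 2 * (g x * (∑ i : Fin n, a i * χ i x)) + (∑ i : Fin n, a i * χ i x) ^ 2 := by
      intro x; ring
    simp_rw [this]
    rw [Finset.sum_add_distrib, Finset.sum_sub_distrib, ← Finset.mul_sum, e1, e2]
    ring
  have hgsum : ∑ x : Fin n → Bool, g x ^ 2 ≤ 2 ^ n := by
    calc ∑ x : Fin n → Bool, g x ^ 2 ≤ ∑ x : Fin n → Bool, (1:ℝ) :=
          Finset.sum_le_sum fun x _ => hg x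
      _ = 2 ^ n := by simp
  have h2n : (0:ℝ) < 2 ^ n := by positivity
  nlinarith [h0, expand, hgsum]



/-- for any Boolean function `f` on `{0,1}^n`, the average over a uniformly
random index `i` of the total variation distance between `f(U_n)` and `f(U^{[i]})`
(which equals the absolute difference of the probabilities of outputting `1`)
is at most `2/√n`. -/
theorem stmt1 (n : ℕ) (hn : 0 < n) (f : (Fin n → Bool) → Bool) :
    (1 / (n : ℝ)) * ∑ i : Fin n,
      |(∑ x : Fin n → Bool, if f x then (1:ℝ) else 0) / 2 ^ n -
        (∑ x ∈ Finset.univ.filter (fun x : Fin n → Bool => x i = true),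
          if f x then (1:ℝ) else 0) / 2 ^ (n - 1)|
      ≤ 2 / Real.sqrt n := by
  set g : (Fin n → Bool) → ℝ := fun x => if f x then (1:ℝ) else 0 with hgdef
  set S : ℝ := ∑ x : Fin n → Bool, g x with hS
  set Si : Fin n → ℝ := fun i =>
    ∑ x ∈ Finset.univ.filter (fun x : Fin n → Bool => x i = true), g x with hSi
  set a : Fin n → ℝ := fun i => (S - 2 * Si i) / 2 ^ n with ha
  have h2n : (0:ℝ) < 2 ^ n := by positivity
  -- key: ∑ g χ = S - 2 Si
  have key : ∀ i : Fin n, ∑ x : Fin n → Bool, g x * χ i x = a i * 2 ^ n := by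
    intro i
    have hsplit := Finset.sum_filter_add_sum_filter_not Finset.univ
      (fun x : Fin n → Bool => x i = true) (fun x => g x * χ i x)
    have h1 : ∑ x ∈ Finset.univ.filter (fun x : Fin n → Bool => x i = true),
        g x * χ i x = - Si i := by
      rw [hSi, ← Finset.sum_neg_distrib]
      refine Finset.sum_congr rfl fun x hx => ?_
      simp only [Finset.mem_filter] at hx
      simp [χ, hx.2]
    have h2 : ∑ x ∈ Finset.univ.filter (fun x : Fin n → Bool => ¬ x i = true),
        g x * χ i x = S - Si i := by
      have : ∑ x ∈ Finset.univ.filter (fun x : Fin n → Bool => ¬ x i = true),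
          g x * χ i x = ∑ x ∈ Finset.univ.filter (fun x : Fin n → Bool => ¬ x i = true), g x := by
        refine Finset.sum_congr rfl fun x hx => ?_
        simp only [Finset.mem_filter] at hx
        simp [χ, hx.2]
      rw [this]
      have := Finset.sum_filter_add_sum_filter_not Finset.univ
        (fun x : Fin n → Bool => x i = true) g
      rw [hS, hSi]
      linarith [this]
    rw [← hsplit, h1, h2, ha]
    field_simp
    ring
  -- inner term equals |a i|
  have inner_eq : ∀ i : Fin n,
      |S / 2 ^ n - Si i / 2 ^ (n - 1)| = |a i| := by
    intro i
    congr 1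
    have hpow : (2:ℝ) ^ n = 2 ^ (n - 1) * 2 := by
      rw [← pow_succ]
      congr 1
      omega
    rw [ha, hpow]
    have h2n1 : (0:ℝ) < 2 ^ (n-1) := by positivity
    field_simp
  -- bessel
  have hb : ∑ i : Fin n, (a i) ^ 2 ≤ 1 := by
    refine bessel g (fun x => ?_) a key
    by_cases h : f x <;> simp [hgdef, h]
  -- cauchy
  have habs : ∑ i : Fin n, |a i| ≤ Real.sqrt n := by
    have hcs := Finset.sum_mul_sq_le_sq_mul_sq Finset.univ (fun _ : Fin n => (1:ℝ))
      (fun i => |a i|)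
    simp only [one_mul, one_pow, sq_abs] at hcs
    have hcard : ∑ _i : Fin n, (1:ℝ) = n := by simp
    rw [hcard] at hcs
    have h0 : 0 ≤ ∑ i : Fin n, |a i| := Finset.sum_nonneg fun i _ => abs_nonneg _
    have := Real.sqrt_le_sqrt (le_trans hcs (by nlinarith : (n:ℝ) * ∑ i : Fin n, a i ^ 2 ≤ n))
    rwa [Real.sqrt_sq h0] at this
  -- final
  have hsn : (0:ℝ) < Real.sqrt n := Real.sqrt_pos.mpr (by exact_mod_cast hn)
  have hnn : (0:ℝ) < n := by exact_mod_cast hn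
  calc (1 / (n : ℝ)) * ∑ i : Fin n,
      |S / 2 ^ n - Si i / 2 ^ (n - 1)|
      = (1 / (n : ℝ)) * ∑ i : Fin n, |a i| := by
        congr 1
        exact Finset.sum_congr rfl fun i _ => inner_eq i
    _ ≤ (1 / (n : ℝ)) * Real.sqrt n := by
        apply mul_le_mul_of_nonneg_left habs
        positivity
    _ ≤ 2 / Real.sqrt n := by
        rw [div_mul_eq_mul_div, one_mul, div_le_div_iff₀ hnn hsn]
        nlinarith [Real.sq_sqrt (le_of_lt hnn)]
end

section
/- Let p ∈ [0,1] with binary entropy H(p) ≥ 0.9. Then p ∈ [0.3, 0.7], and moreover (1 − H(p))/(p − 1/2)² ∈ [2, 3]. -/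
open Real Set

/-- Binary Shannon entropy (base 2). -/
noncomputable def H2 (p : ℝ) : ℝ :=
  -(p * Real.logb 2 p) - (1 - p) * Real.logb 2 (1 - p)


/-- Generic helper: if `f` has derivative `g` on `[0,t]` and `g ≥ 0` on `(0,t)`, then
`f 0 ≤ f t`. -/
lemma aux_mono {f g : ℝ → ℝ} {t : ℝ} (h0 : 0 ≤ t)
    (hd : ∀ s ∈ Icc (0:ℝ) t, HasDerivAt f (g s) s)
    (hg : ∀ s ∈ Ioo (0:ℝ) t, 0 ≤ g s) : f 0 ≤ f t := by
  have hmono : MonotoneOn f (Icc 0 t) := by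
    apply monotoneOn_of_deriv_nonneg (convex_Icc 0 t)
    · exact fun s hs => (hd s hs).continuousAt.continuousWithinAt
    · rw [interior_Icc]
      exact fun s hs => (hd s (Ioo_subset_Icc_self hs)).differentiableAt.differentiableWithinAt
    · rw [interior_Icc]
      intro s hs
      rw [(hd s (Ioo_subset_Icc_self hs)).deriv]
      exact hg s hs
  exact hmono ⟨le_refl 0, h0⟩ ⟨h0, le_refl t⟩ h0

lemma dlog1p {s : ℝ} (h : (0:ℝ) < 1 + s) :
    HasDerivAt (fun x : ℝ => Real.log (1+x)) (1/(1+s)) s := by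
  simpa using (((hasDerivAt_id s).const_add 1).log h.ne')

lemma dlog1m {s : ℝ} (h : (0:ℝ) < 1 - s) :
    HasDerivAt (fun x : ℝ => Real.log (1-x)) (-(1/(1-s))) s := by
  have := (((hasDerivAt_id s).const_sub 1).log h.ne')
  simpa [neg_div] using this

lemma L1 (t : ℝ) (h0 : 0 ≤ t) (h1 : t < 1) :
    2*t ≤ Real.log (1+t) - Real.log (1-t) := by
  have key := aux_mono (f := fun s => Real.log (1+s) - Real.log (1-s) - 2*s)
      (g := fun s => 1/(1+s) + 1/(1-s) - 2) h0 ?_ ?_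
  · simpa using key
  · intro s hs
    have hp : (0:ℝ) < 1 + s := by linarith [hs.1]
    have hm : (0:ℝ) < 1 - s := by linarith [hs.2]
    have := ((dlog1p hp).sub (dlog1m hm)).sub ((hasDerivAt_id s).const_mul 2)
    exact this.congr_deriv (by ring)
  · intro s hs
    have hp : (0:ℝ) < 1 + s := by linarith [hs.1]
    have hm : (0:ℝ) < 1 - s := by nlinarith [hs.2, h1]
    rw [div_add_div _ _ hp.ne' hm.ne']
    rw [sub_nonneg, le_div_iff₀ (by positivity)]
    nlinarith [hs.1, hs.2]

lemma L2 (t : ℝ) (h0 : 0 ≤ t) (h1 : t < 1) :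
    t^2 ≤ (1+t) * Real.log (1+t) + (1-t) * Real.log (1-t) := by
  have key := aux_mono
      (f := fun s => (1+s) * Real.log (1+s) + (1-s) * Real.log (1-s) - s^2)
      (g := fun s => Real.log (1+s) - Real.log (1-s) - 2*s) h0 ?_ ?_
  · simpa using key
  · intro s hs
    have hp : (0:ℝ) < 1 + s := by linarith [hs.1]
    have hm : (0:ℝ) < 1 - s := by linarith [hs.2]
    have d1 := ((hasDerivAt_id s).const_add 1).mul (dlog1p hp)
    have d2 := ((hasDerivAt_id s).const_sub 1).mul (dlog1m hm)
    have d3 := hasDerivAt_pow 2 s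
    have := (d1.add d2).sub d3
    exact this.congr_deriv (by simp only [id]; field_simp; ring)
  · intro s hs
    have := L1 s hs.1.le (lt_of_lt_of_le hs.2 h1.le)
    linarith

lemma L3 (t : ℝ) (h0 : 0 ≤ t) (h1 : t ≤ 1/2) :
    Real.log (1+t) - Real.log (1-t) ≤ 2*t + (2/3)*t^3 + (3/5)*t^5 := by
  have key := aux_mono
      (f := fun s => 2*s + (2/3)*s^3 + (3/5)*s^5 - (Real.log (1+s) - Real.log (1-s)))
      (g := fun s => 2 + 2*s^2 + 3*s^4 - (1/(1+s) + 1/(1-s))) h0 ?_ ?_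
  · simpa using key
  · intro s hs
    have hp : (0:ℝ) < 1 + s := by linarith [hs.1]
    have hm : (0:ℝ) < 1 - s := by linarith [hs.2, h1]
    have d1 := ((hasDerivAt_pow 3 s).const_mul (2/3:ℝ))
    have d2 := ((hasDerivAt_pow 5 s).const_mul (3/5:ℝ))
    have d0 := (hasDerivAt_id s).const_mul (2:ℝ)
    have dl := (dlog1p hp).sub (dlog1m hm)
    have := ((d0.add d1).add d2).sub dl
    exact this.congr_deriv (by ring)
  · intro s hs
    have hs2 : s ≤ 1/2 := le_trans hs.2.le h1
    have hp : (0:ℝ) < 1 + s := by linarith [hs.1]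
    have hm : (0:ℝ) < 1 - s := by linarith
    rw [div_add_div _ _ hp.ne' hm.ne', sub_nonneg, div_le_iff₀ (by positivity)]
    have h13 : (0:ℝ) ≤ 1 - 3*s^2 := by nlinarith [hs.1, hs2]
    nlinarith [mul_nonneg (pow_nonneg hs.1.le 4) h13]

lemma L4 (t : ℝ) (h0 : 0 ≤ t) (h1 : t ≤ 1/2) :
    (1+t) * Real.log (1+t) + (1-t) * Real.log (1-t)
      ≤ t^2 + t^4/6 + t^6/10 := by
  have key := aux_mono
      (f := fun s => s^2 + s^4/6 + s^6/10
        - ((1+s) * Real.log (1+s) + (1-s) * Real.log (1-s)))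
      (g := fun s => 2*s + (2/3)*s^3 + (3/5)*s^5
        - (Real.log (1+s) - Real.log (1-s))) h0 ?_ ?_
  · simpa using key
  · intro s hs
    have hp : (0:ℝ) < 1 + s := by linarith [hs.1]
    have hm : (0:ℝ) < 1 - s := by linarith [hs.2, h1]
    have d1 := ((hasDerivAt_id s).const_add 1).mul (dlog1p hp)
    have d2 := ((hasDerivAt_id s).const_sub 1).mul (dlog1m hm)
    have e2 := hasDerivAt_pow 2 s
    have e4 := (hasDerivAt_pow 4 s).div_const 6
    have e6 := (hasDerivAt_pow 6 s).div_const 10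
    have := ((e2.add e4).add e6).sub (d1.add d2)
    exact this.congr_deriv (by simp only [id]; field_simp; ring)
  · intro s hs
    have := L3 s hs.1.le (le_trans hs.2.le h1)
    linarith

lemma H2_symm (p : ℝ) : H2 (1-p) = H2 p := by
  unfold H2
  rw [show (1:ℝ)-(1-p) = p by ring]
  ring

lemma one_sub_H2 (p : ℝ) (hp0 : 0 < p) (hp1 : p < 1) :
    1 - H2 p = ((1+(2*p-1)) * Real.log (1+(2*p-1))
      + (1-(2*p-1)) * Real.log (1-(2*p-1))) / (2 * Real.log 2) := by
  have l2 : (0:ℝ) < Real.log 2 := Real.log_pos (by norm_num)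
  have e1 : Real.log (1+(2*p-1)) = Real.log 2 + Real.log p := by
    rw [show 1+(2*p-1) = 2*p by ring, Real.log_mul (by norm_num) hp0.ne']
  have e2 : Real.log (1-(2*p-1)) = Real.log 2 + Real.log (1-p) := by
    rw [show 1-(2*p-1) = 2*(1-p) by ring, Real.log_mul (by norm_num) (by linarith)]
  unfold H2 Real.logb
  rw [e1, e2]
  field_simp
  ring

lemma main_half (p : ℝ) (hp : 1/2 ≤ p) (hp1 : p ≤ 1) (hH : 0.9 ≤ H2 p) :
    p ≤ 0.7 ∧ 2 * (p - 1/2)^2 ≤ 1 - H2 p ∧ 1 - H2 p ≤ 3 * (p - 1/2)^2 := by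
  have hl2a : (0.6931471803:ℝ) < Real.log 2 := Real.log_two_gt_d9
  have hl2b : Real.log 2 < 0.6931471808 := Real.log_two_lt_d9
  have l2 : (0:ℝ) < Real.log 2 := by linarith
  have hp1' : p < 1 := by
    rcases lt_or_eq_of_le hp1 with h | h
    · exact h
    · exfalso
      rw [h] at hH
      unfold H2 at hH
      simp [Real.logb] at hH
      linarith
  set t := 2*p - 1 with ht
  have ht0 : 0 ≤ t := by simp [ht]; linarith
  have ht1 : t < 1 := by simp [ht]; linarith
  set φ := (1+t) * Real.log (1+t) + (1-t) * Real.log (1-t) with hφ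
  have hid : 1 - H2 p = φ / (2 * Real.log 2) := one_sub_H2 p (by linarith) hp1'
  have hlow : t^2 ≤ φ := L2 t ht0 ht1
  have hHle : 1 - H2 p ≤ 0.1 := by linarith
  have hφle : φ ≤ 0.2 * Real.log 2 := by
    have : φ / (2 * Real.log 2) ≤ 0.1 := by rw [← hid]; exact hHle
    rw [div_le_iff₀ (by positivity)] at this
    linarith
  have ht2 : t^2 ≤ 0.2 * Real.log 2 := le_trans hlow hφle
  have ht2' : t ≤ 0.4 := by nlinarith
  have htt : t ≤ 1/2 := by linarith
  have hup : φ ≤ t^2 + t^4/6 + t^6/10 := L4 t ht0 htt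
  refine ⟨by simp [ht] at ht2' ⊢; linarith, ?_, ?_⟩
  · -- lower bound
    rw [hid]
    rw [le_div_iff₀ (by positivity)]
    have hx : (p - 1/2)^2 = t^2/4 := by simp [ht]; ring
    rw [hx]
    nlinarith [sq_nonneg t]
  · -- upper bound
    rw [hid]
    rw [div_le_iff₀ (by positivity)]
    have hx : (p - 1/2)^2 = t^2/4 := by simp [ht]; ring
    rw [hx]
    have h4 : t^4 = t^2 * t^2 := by ring
    have h6 : t^6 = t^2 * t^2 * t^2 := by ring
    nlinarith [sq_nonneg t, mul_le_mul_of_nonneg_left ht2 (sq_nonneg t),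
      mul_le_mul_of_nonneg_left (mul_le_mul_of_nonneg_left ht2 (sq_nonneg t)) (sq_nonneg t)]

/-- if `H(p) ≥ 0.9` then `p ∈ [0.3, 0.7]` and
`(1 - H(p))/(p - 1/2)² ∈ [2, 3]`, stated multiplicatively as
`2·(p-1/2)² ≤ 1 - H(p) ≤ 3·(p-1/2)²`. -/
theorem stmt4 (p : ℝ) (hp0 : 0 ≤ p) (hp1 : p ≤ 1) (hH : 0.9 ≤ H2 p) :
    p ∈ Set.Icc (0.3 : ℝ) 0.7 ∧
    2 * (p - 1/2)^2 ≤ 1 - H2 p ∧ 1 - H2 p ≤ 3 * (p - 1/2)^2 := by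
  by_cases hp : 1/2 ≤ p
  · obtain ⟨h7, hl, hu⟩ := main_half p hp hp1 hH
    refine ⟨⟨by norm_num; linarith, h7⟩, hl, hu⟩
  · push_neg at hp
    have hH' : 0.9 ≤ H2 (1-p) := by rw [H2_symm]; exact hH
    obtain ⟨h7, hl, hu⟩ := main_half (1-p) (by linarith) (by linarith) hH'
    have hs : H2 (1-p) = H2 p := H2_symm p
    have hq : (1-p - 1/2)^2 = (p - 1/2)^2 := by ring
    rw [hs, hq] at hl hu
    exact ⟨⟨by norm_num at h7 ⊢; linarith, by linarith⟩, hl, hu⟩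
end

section
/- Let f : {0,1}^{k+1} → {0,1}. For b ∈ {0,1}^k, let U_{[b]} denote the uniform distribution on {(x, x·b) : x ∈ {0,1}^k} ⊆ {0,1}^{k+1}, where x·b is the inner product mod 2, and let U_{k+1} be uniform on {0,1}^{k+1}. Then Σ_{b ∈ {0,1}^k} ‖f(U_{k+1}) − f(U_{[b]})‖² ≤ E_{x ∼ U_{k+1}}[f(x)] ≤ 1. -/
open Finset

/-- Inner product mod 2 of two Boolean vectors. -/
def ip {k : ℕ} (x b : Fin k → Bool) : Bool :=
  decide ((Finset.univ.filter (fun i => x i && b i)).card % 2 = 1)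

noncomputable def S : Bool → ℝ := fun t => if t then -1 else 1

lemma sign_ip {k : ℕ} (x b : Fin k → Bool) :
    S (ip x b) = ∏ i, S (x i && b i) := by
  unfold ip S
  rw [Finset.prod_ite (f := fun _ => (-1:ℝ)) (g := fun _ => (1:ℝ))]
  simp only [Finset.prod_const, Finset.prod_const_one, mul_one, Bool.and_eq_true,
    decide_eq_true_eq]
  rcases Nat.even_or_odd ((Finset.univ.filter (fun i => (x i && b i) = true)).card) with h | h <;>
    simp only [Bool.and_eq_true] at h
  · simp [Nat.even_iff.mp h, h.neg_one_pow]
  · simp [Nat.odd_iff.mp h, h.neg_one_pow]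

lemma char_sum {k : ℕ} (w : Fin k → Bool) :
    ∑ b : Fin k → Bool, ∏ i, S (w i && b i) =
      if w = (fun _ => false) then (2:ℝ)^k else 0 := by
  have hps := Finset.prod_univ_sum (κ := fun _ : Fin k => Bool)
    (fun _ => (univ : Finset Bool)) (fun i v => S (w i && v))
  rw [← Fintype.piFinset_univ, ← hps]
  have h : ∀ i, (∑ v : Bool, S (w i && v)) = if w i then 0 else 2 := by
    intro i; cases h : w i <;> simp [S]
  simp_rw [h]
  by_cases hw : w = (fun _ => false)
  · simp [hw]
  · rw [if_neg hw]
    obtain ⟨i, hi⟩ : ∃ i, w i = true := by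
      by_contra hc
      push_neg at hc
      exact hw (funext fun i => by simpa using hc i)
    exact Finset.prod_eq_zero (Finset.mem_univ i) (by simp [hi])


/-- for any Boolean `f` on `{0,1}^{k+1}`,
`Σ_b ‖f(U_{k+1}) − f(U_{[b]})‖² ≤ E_{U_{k+1}}[f] ≤ 1`. -/
theorem stmt5 (k : ℕ) (f : ((Fin k → Bool) × Bool) → Bool) :
    (∑ b : Fin k → Bool,
      ((∑ z : (Fin k → Bool) × Bool, if f z then (1:ℝ) else 0) / 2 ^ (k+1) -
        (∑ x : Fin k → Bool, if f (x, ip x b) then (1:ℝ) else 0) / 2 ^ k) ^ 2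
      ≤ (∑ z : (Fin k → Bool) × Bool, if f z then (1:ℝ) else 0) / 2 ^ (k+1)) ∧
    (∑ z : (Fin k → Bool) × Bool, if f z then (1:ℝ) else 0) / 2 ^ (k+1) ≤ 1 := by
  set T : ℝ := ∑ z : (Fin k → Bool) × Bool, if f z then (1:ℝ) else 0 with hT
  set e : (Fin k → Bool) → ℝ := fun x =>
    (if f (x, true) then (1:ℝ) else 0) - (if f (x, false) then (1:ℝ) else 0) with he
  have hTnn : 0 ≤ T := Finset.sum_nonneg fun z _ => by positivity
  have h1 : T = ∑ x : Fin k → Bool,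
      ((if f (x, true) then (1:ℝ) else 0) + (if f (x, false) then (1:ℝ) else 0)) := by
    rw [hT, Fintype.sum_prod_type]
    exact Finset.sum_congr rfl fun x _ => Fintype.sum_bool _
  have hpow : (0:ℝ) < 2 ^ (k+1) := by positivity
  have hpowk : (0:ℝ) < 2 ^ k := by positivity
  -- key per-b identity
  have h2 : ∀ b : Fin k → Bool,
      T / 2 ^ (k+1) - (∑ x : Fin k → Bool, if f (x, ip x b) then (1:ℝ) else 0) / 2 ^ k
        = (∑ x : Fin k → Bool, e x * S (ip x b)) / 2 ^ (k+1) := by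
    intro b
    have key : T - 2 * (∑ x : Fin k → Bool, if f (x, ip x b) then (1:ℝ) else 0)
        = ∑ x : Fin k → Bool, e x * S (ip x b) := by
      rw [h1, Finset.mul_sum, ← Finset.sum_sub_distrib]
      refine Finset.sum_congr rfl fun x _ => ?_
      cases hip : ip x b <;> cases hft : f (x, true) <;> cases hff : f (x, false) <;>
        simp [he, S, hip, hft, hff] <;> ring
    set A := ∑ x : Fin k → Bool, if f (x, ip x b) then (1:ℝ) else 0 with hA
    set R := ∑ x : Fin k → Bool, e x * S (ip x b) with hR
    have hR' : R = T - 2 * A := key.symm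
    rw [hR', pow_succ]
    field_simp
  have h3 : ∀ x y : Fin k → Bool,
      (∑ b : Fin k → Bool, S (ip x b) * S (ip y b)) = if x = y then (2:ℝ)^k else 0 := by
    intro x y
    have hb : ∀ b : Fin k → Bool,
        S (ip x b) * S (ip y b) = ∏ i, S ((x i != y i) && b i) := by
      intro b
      rw [sign_ip, sign_ip, ← Finset.prod_mul_distrib]
      exact Finset.prod_congr rfl fun i _ => by
        cases x i <;> cases y i <;> cases b i <;> simp [S]
    simp_rw [hb]
    rw [char_sum]
    have : ((fun i => x i != y i) = (fun _ => false)) ↔ x = y := by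
      constructor
      · intro h; funext i
        have := congrFun h i; simpa using this
      · intro h; subst h; funext i; simp
    simp only [this]
  have h4 : ∑ b : Fin k → Bool, (∑ x : Fin k → Bool, e x * S (ip x b)) ^ 2
      = 2 ^ k * ∑ x : Fin k → Bool, (e x) ^ 2 := by
    have expand : ∀ b : Fin k → Bool, (∑ x : Fin k → Bool, e x * S (ip x b)) ^ 2
        = ∑ x : Fin k → Bool, ∑ y : Fin k → Bool,
            (e x * e y) * (S (ip x b) * S (ip y b)) := by
      intro b
      rw [sq, Finset.sum_mul_sum]
      exact Finset.sum_congr rfl fun x _ => Finset.sum_congr rfl fun y _ => by ring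
    simp_rw [expand]
    rw [Finset.sum_comm]
    have : ∀ x : Fin k → Bool,
        (∑ b : Fin k → Bool, ∑ y : Fin k → Bool, (e x * e y) * (S (ip x b) * S (ip y b)))
          = 2 ^ k * (e x) ^ 2 := by
      intro x
      rw [Finset.sum_comm]
      have hy : ∀ y : Fin k → Bool,
          (∑ b : Fin k → Bool, (e x * e y) * (S (ip x b) * S (ip y b)))
            = (e x * e y) * (if x = y then (2:ℝ)^k else 0) := by
        intro y; rw [← Finset.mul_sum, h3]
      simp_rw [hy]
      simp_rw [mul_ite, mul_zero]
      rw [Finset.sum_ite_eq]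
      simp [sq]
      ring
    simp_rw [this]
    rw [← Finset.mul_sum]
  have h5 : ∑ x : Fin k → Bool, (e x) ^ 2 ≤ T := by
    rw [h1]
    refine Finset.sum_le_sum fun x _ => ?_
    cases hft : f (x, true) <;> cases hff : f (x, false) <;>
      simp [he, hft, hff] <;> norm_num
  constructor
  · have step : (∑ b : Fin k → Bool,
        (T / 2 ^ (k+1) -
          (∑ x : Fin k → Bool, if f (x, ip x b) then (1:ℝ) else 0) / 2 ^ k) ^ 2)
        = (2 ^ k * ∑ x : Fin k → Bool, (e x) ^ 2) / ((2:ℝ) ^ (k+1)) ^ 2 := by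
      have step1 : (∑ b : Fin k → Bool,
          (T / 2 ^ (k+1) -
            (∑ x : Fin k → Bool, if f (x, ip x b) then (1:ℝ) else 0) / 2 ^ k) ^ 2)
          = ∑ b : Fin k → Bool,
              ((∑ x : Fin k → Bool, e x * S (ip x b)) ^ 2 / ((2:ℝ) ^ (k+1)) ^ 2) :=
        Finset.sum_congr rfl fun b _ => by rw [h2 b, div_pow]
      rw [step1, ← Finset.sum_div, h4]
    rw [step]
    have hle : (2:ℝ) ^ k * ∑ x : Fin k → Bool, (e x) ^ 2 ≤ 2 ^ k * T :=
      mul_le_mul_of_nonneg_left h5 hpowk.le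
    have heq : ((2:ℝ) ^ k * T) / ((2:ℝ) ^ (k+1)) ^ 2 = T / 2 ^ (k+2) := by
      rw [pow_succ, pow_succ, pow_succ]
      field_simp
      ring
    calc (2 ^ k * ∑ x : Fin k → Bool, (e x) ^ 2) / ((2:ℝ) ^ (k+1)) ^ 2
        ≤ ((2:ℝ) ^ k * T) / ((2:ℝ) ^ (k+1)) ^ 2 := by gcongr
      _ = T / 2 ^ (k+2) := heq
      _ ≤ T / 2 ^ (k+1) := by
          gcongr
          · norm_num
          · omega
  · rw [div_le_one hpow]
    have : T ≤ ∑ _z : (Fin k → Bool) × Bool, (1:ℝ) := by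
      refine Finset.sum_le_sum fun z _ => ?_
      split <;> norm_num
    refine this.trans ?_
    rw [Finset.sum_const, nsmul_eq_mul, mul_one]
    norm_num [pow_succ]
end

section
/- Let k be an integer, D ⊆ {0,1}^{k+1} with |D| ≥ 2^{k/2}, and f : {0,1}^{k+1} → {0,1}. For b ∈ {0,1}^k, let U_{[b],D} be the uniform distribution on D ∩ {(x, x·b) : x ∈ {0,1}^k} and U_{k+1,D} the uniform distribution on D (if the first set is empty take U_{[b],D} uniform on D). Then E_{b ∼ U_k}[ ‖f(U_{[b],D}) − f(U_{k+1,D})‖ ] ≤ 2^{−k/9} (for all sufficiently large k). -/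
open Finset

namespace Stmt8Aux

variable {k : ℕ}

noncomputable def tau (z : (Fin k → Bool) × Bool) (b : Fin k → Bool) : ℝ :=
  if z.2 = ip z.1 b then 1 else -1

lemma pow_card_eq_prod (x b : Fin k → Bool) :
    (-1:ℝ) ^ (Finset.univ.filter (fun i => x i && b i)).card
      = ∏ i, (-1:ℝ) ^ (if x i && b i then 1 else 0) := by
  rw [Finset.prod_pow_eq_pow_sum, Finset.card_filter]

lemma neg_one_pow_card (x b : Fin k → Bool) :
    (-1:ℝ) ^ (Finset.univ.filter (fun i => x i && b i)).card
      = if ip x b then -1 else 1 := by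
  rcases Nat.even_or_odd ((Finset.univ.filter (fun i => x i && b i)).card) with h | h
  · rw [h.neg_one_pow, ip]
    rw [Nat.even_iff] at h
    simp only [h]
    norm_num
  · rw [h.neg_one_pow, ip]
    rw [Nat.odd_iff] at h
    simp only [h]
    norm_num

lemma char_sum (v : Fin k → Bool) (hv : v ≠ fun _ => false) :
    ∑ b : Fin k → Bool, (-1:ℝ) ^ (Finset.univ.filter (fun i => v i && b i)).card = 0 := by
  obtain ⟨i₀, hi₀⟩ : ∃ i, v i = true := by
    by_contra h
    push_neg at h
    exact hv (funext fun i => by simpa using h i)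
  have : ∑ b : Fin k → Bool, (-1:ℝ) ^ (Finset.univ.filter (fun i => v i && b i)).card
      = ∏ i, ∑ β : Bool, (-1:ℝ) ^ (if v i && β then 1 else 0) := by
    rw [Fintype.prod_sum]
    exact Finset.sum_congr rfl fun b _ => pow_card_eq_prod v b
  rw [this]
  apply Finset.prod_eq_zero (Finset.mem_univ i₀)
  simp [hi₀]

lemma tau_eq (z : (Fin k → Bool) × Bool) (b : Fin k → Bool) :
    tau z b = (if z.2 then -1 else 1) *
      (-1:ℝ) ^ (Finset.univ.filter (fun i => z.1 i && b i)).card := by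
  rw [neg_one_pow_card]
  rcases z with ⟨x, c⟩
  cases c <;> cases hip : ip x b <;> simp [tau, hip]

lemma pow_card_xor (x y b : Fin k → Bool) :
    (-1:ℝ) ^ (Finset.univ.filter (fun i => x i && b i)).card *
      (-1:ℝ) ^ (Finset.univ.filter (fun i => y i && b i)).card
    = (-1:ℝ) ^ (Finset.univ.filter (fun i => xor (x i) (y i) && b i)).card := by
  rw [pow_card_eq_prod, pow_card_eq_prod, pow_card_eq_prod, ← Finset.prod_mul_distrib]
  refine Finset.prod_congr rfl fun i _ => ?_
  cases hx : x i <;> cases hy : y i <;> cases hb : b i <;> norm_num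

lemma tau_sq (z : (Fin k → Bool) × Bool) (b : Fin k → Bool) :
    tau z b * tau z b = 1 := by
  unfold tau; split <;> norm_num

lemma tau_corr (z w : (Fin k → Bool) × Bool) (hzw : z ≠ w) :
    ∑ b : Fin k → Bool, tau z b * tau w b ≤ 0 := by
  by_cases hx : z.1 = w.1
  · have hc : z.2 ≠ w.2 := fun hc => hzw (Prod.ext hx hc)
    have : ∀ b : Fin k → Bool, tau z b * tau w b = -1 := by
      intro b
      rcases z with ⟨x, c⟩; rcases w with ⟨y, d⟩
      simp only at hx hc
      subst hx
      cases c <;> cases d <;> simp_all [tau] <;> split <;> norm_num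
    rw [Finset.sum_congr rfl fun b _ => this b]
    simp
  · have hne : (fun i => xor (z.1 i) (w.1 i)) ≠ fun _ => false := by
      intro h
      apply hx
      funext i
      have hxy := congrFun h i
      cases hzi : z.1 i <;> cases hwi : w.1 i <;> simp_all
    have : ∀ b : Fin k → Bool, tau z b * tau w b
        = ((if z.2 then -1 else 1) * (if w.2 then -1 else 1)) *
          (-1:ℝ) ^ (Finset.univ.filter (fun i => xor (z.1 i) (w.1 i) && b i)).card := by
      intro b
      rw [tau_eq, tau_eq, ← pow_card_xor]
      ring
    rw [Finset.sum_congr rfl fun b _ => this b, ← Finset.mul_sum, char_sum _ hne, mul_zero]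


lemma second_moment {α : Type*} [Fintype α] {E : Type*} [DecidableEq E]
    (D : Finset E) (tau : E → α → ℝ)
    (hsq : ∀ z b, tau z b * tau z b = 1)
    (hcorr : ∀ z w, z ≠ w → ∑ b : α, tau z b * tau w b ≤ 0)
    (w : E → ℝ) (hw0 : ∀ z, 0 ≤ w z) (hw1 : ∀ z, w z ≤ 1) :
    ∑ b : α, (∑ z ∈ D, w z * tau z b) ^ 2
      ≤ (Fintype.card α : ℝ) * D.card := by
  have expand : ∑ b : α, (∑ z ∈ D, w z * tau z b) ^ 2
      = ∑ z ∈ D, ∑ z' ∈ D, (w z * w z') * ∑ b : α, tau z b * tau z' b := by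
    calc ∑ b : α, (∑ z ∈ D, w z * tau z b) ^ 2
        = ∑ b : α, ∑ z ∈ D, ∑ z' ∈ D, (w z * w z') * (tau z b * tau z' b) := by
          refine Finset.sum_congr rfl fun b _ => ?_
          rw [sq, Finset.sum_mul_sum]
          exact Finset.sum_congr rfl fun z _ =>
            Finset.sum_congr rfl fun z' _ => by ring
      _ = ∑ z ∈ D, ∑ z' ∈ D, (w z * w z') * ∑ b : α, tau z b * tau z' b := by
          rw [Finset.sum_comm]
          refine Finset.sum_congr rfl fun z _ => ?_
          rw [Finset.sum_comm]
          exact Finset.sum_congr rfl fun z' _ => (Finset.mul_sum _ _ _).symm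
  rw [expand]
  have inner_bound : ∀ z ∈ D,
      ∑ z' ∈ D, (w z * w z') * ∑ b : α, tau z b * tau z' b
        ≤ (Fintype.card α : ℝ) := by
    intro z hz
    rw [← Finset.sum_erase_add D _ hz]
    have h1 : ∑ z' ∈ D.erase z, (w z * w z') * ∑ b : α, tau z b * tau z' b ≤ 0 := by
      apply Finset.sum_nonpos
      intro z' hz'
      have hne : z ≠ z' := (Finset.ne_of_mem_erase hz').symm
      exact mul_nonpos_of_nonneg_of_nonpos (mul_nonneg (hw0 z) (hw0 z'))
        (hcorr z z' hne)
    have h2 : (w z * w z) * ∑ b : α, tau z b * tau z b ≤ (Fintype.card α : ℝ) := by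
      have : ∑ b : α, tau z b * tau z b = (Fintype.card α : ℝ) := by
        rw [Finset.sum_congr rfl fun b _ => hsq z b]
        simp
      rw [this]
      have hcard : (0:ℝ) ≤ (Fintype.card α : ℝ) := Nat.cast_nonneg _
      have hww : w z * w z ≤ 1 := by nlinarith [hw0 z, hw1 z]
      calc w z * w z * (Fintype.card α : ℝ)
          ≤ 1 * (Fintype.card α : ℝ) := mul_le_mul_of_nonneg_right hww hcard
        _ = (Fintype.card α : ℝ) := one_mul _
    linarith
  calc ∑ z ∈ D, ∑ z' ∈ D, (w z * w z') * ∑ b : α, tau z b * tau z' b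
      ≤ ∑ _z ∈ D, (Fintype.card α : ℝ) := Finset.sum_le_sum inner_bound
    _ = (D.card : ℝ) * (Fintype.card α : ℝ) := by rw [Finset.sum_const, nsmul_eq_mul]
    _ = (Fintype.card α : ℝ) * D.card := by ring

lemma abs_sum_le_sqrt {α : Type*} [Fintype α] (X : α → ℝ) :
    ∑ b : α, |X b| ≤ Real.sqrt ((Fintype.card α : ℝ) * ∑ b : α, X b ^ 2) := by
  have h := sq_sum_le_card_mul_sum_sq (s := (Finset.univ : Finset α))
    (f := fun b => |X b|)
  simp only [sq_abs, Finset.card_univ] at h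
  have h0 : (0:ℝ) ≤ ∑ b : α, |X b| := Finset.sum_nonneg fun b _ => abs_nonneg _
  calc ∑ b : α, |X b| = Real.sqrt ((∑ b : α, |X b|) ^ 2) := (Real.sqrt_sq h0).symm
    _ ≤ Real.sqrt ((Fintype.card α : ℝ) * ∑ b : α, X b ^ 2) := Real.sqrt_le_sqrt h

lemma ratio_bound (a s N S : ℝ) (ha1 : 1 ≤ a) (hs0 : 0 ≤ s) (hsa : s ≤ a)
    (hN : 1 ≤ N) (hS0 : 0 ≤ S) (hSN : S ≤ N) :
    |s / a - S / N| ≤ 4 / N * (|s - S / 2| + |a - N / 2|) := by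
  have ha0 : (0:ℝ) < a := by linarith
  have hN0 : (0:ℝ) < N := by linarith
  by_cases h : N / 4 ≤ a
  · have key : s / a - S / N = (N * (s - S / 2) - S * (a - N / 2)) / (N * a) := by
      field_simp
      ring
    rw [key, abs_div, abs_of_pos (by positivity : (0:ℝ) < N * a)]
    have hnum : |N * (s - S / 2) - S * (a - N / 2)|
        ≤ N * (|s - S / 2| + |a - N / 2|) := by
      calc |N * (s - S / 2) - S * (a - N / 2)|
          ≤ |N * (s - S / 2)| + |S * (a - N / 2)| := abs_sub _ _
        _ = N * |s - S / 2| + S * |a - N / 2| := by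
            rw [abs_mul, abs_mul, abs_of_pos hN0, abs_of_nonneg hS0]
        _ ≤ N * |s - S / 2| + N * |a - N / 2| := by
            have := abs_nonneg (a - N / 2)
            nlinarith
        _ = N * (|s - S / 2| + |a - N / 2|) := by ring
    calc |N * (s - S / 2) - S * (a - N / 2)| / (N * a)
        ≤ N * (|s - S / 2| + |a - N / 2|) / (N * a) := by
          apply div_le_div_of_nonneg_right hnum (by positivity)
      _ ≤ 4 / N * (|s - S / 2| + |a - N / 2|) := by
          rw [div_le_iff₀ (by positivity)]
          have habs : (0:ℝ) ≤ |s - S / 2| + |a - N / 2| :=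
            add_nonneg (abs_nonneg _) (abs_nonneg _)
          have h4 : N * N / 4 ≤ N * a := by nlinarith
          calc N * (|s - S / 2| + |a - N / 2|)
              = 4 / N * (|s - S / 2| + |a - N / 2|) * (N * N / 4) := by
                field_simp
            _ ≤ 4 / N * (|s - S / 2| + |a - N / 2|) * (N * a) := by
                apply mul_le_mul_of_nonneg_left h4 (by positivity)
  · push_neg at h
    have h1 : |s / a - S / N| ≤ 1 := by
      have hsa1 : s / a ≤ 1 := (div_le_one ha0).2 hsa
      have hsa0 : 0 ≤ s / a := by positivity
      have hSN1 : S / N ≤ 1 := (div_le_one hN0).2 hSN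
      have hSN0 : 0 ≤ S / N := by positivity
      rw [abs_le]; constructor <;> linarith
    have h2 : N / 4 ≤ |a - N / 2| := by
      rw [abs_sub_comm, abs_of_pos (by linarith : (0:ℝ) < N / 2 - a)]
      linarith
    have := abs_nonneg (s - S / 2)
    calc |s / a - S / N| ≤ 1 := h1
      _ ≤ 4 / N * (N / 4) := by rw [div_mul_eq_mul_div, le_div_iff₀ hN0]; linarith
      _ ≤ 4 / N * (|s - S / 2| + |a - N / 2|) := by
          apply mul_le_mul_of_nonneg_left (by linarith) (by positivity)

end Stmt8Aux

open Stmt8Aux in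
/-- for all sufficiently large `k`, for any `D ⊆ {0,1}^{k+1}` with
`|D| ≥ 2^{k/2}` and any Boolean `f`,
`E_{b∼U_k}[‖f(U_{[b],D}) − f(U_{k+1,D})‖] ≤ 2^{−k/9}` (the distance being `0` when
`D ∩ supp U_{[b]}` is empty, per the convention `U_{[b],D} = U_{k+1,D}` then). -/
theorem stmt8 : ∃ K : ℕ, ∀ k ≥ K, ∀ D : Finset ((Fin k → Bool) × Bool),
    (2:ℝ) ^ ((k:ℝ)/2) ≤ D.card →
    ∀ f : ((Fin k → Bool) × Bool) → Bool,
    (1 / (2:ℝ) ^ k) * ∑ b : Fin k → Bool,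
      (if (D.filter (fun z => z.2 = ip z.1 b)).Nonempty then
        |(∑ z ∈ D.filter (fun z => z.2 = ip z.1 b), if f z then (1:ℝ) else 0) /
            (D.filter (fun z => z.2 = ip z.1 b)).card -
          (∑ z ∈ D, if f z then (1:ℝ) else 0) / D.card|
      else 0)
    ≤ (2:ℝ) ^ (-(k:ℝ)/9) := by
  refine ⟨100, fun k hk D hD f => ?_⟩
  classical
  -- abbreviations
  set w : ((Fin k → Bool) × Bool) → ℝ := fun z => if f z then (1:ℝ) else 0 with hw
  set N : ℝ := (D.card : ℝ) with hNdef
  set S : ℝ := ∑ z ∈ D, w z with hSdef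
  set Db : (Fin k → Bool) → Finset ((Fin k → Bool) × Bool) :=
    fun b => D.filter (fun z => z.2 = ip z.1 b) with hDb
  have hkR : (100:ℝ) ≤ (k:ℝ) := by exact_mod_cast hk
  have h2k : (0:ℝ) < (2:ℝ)^k := by positivity
  have hN1 : (1:ℝ) ≤ N := by
    calc (1:ℝ) = (2:ℝ) ^ (0:ℝ) := (Real.rpow_zero 2).symm
      _ ≤ (2:ℝ) ^ ((k:ℝ)/2) := by
          apply Real.rpow_le_rpow_left_iff (x := 2) (by norm_num) |>.2
          positivity
      _ ≤ N := hD
  have hN0 : (0:ℝ) < N := by linarith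
  -- generic deviation identity
  have hGen : ∀ (u : ((Fin k → Bool) × Bool) → ℝ) (b : Fin k → Bool),
      (∑ z ∈ Db b, u z) - (∑ z ∈ D, u z) / 2
        = (1/2) * ∑ z ∈ D, u z * tau z b := by
    intro u b
    rw [hDb, Finset.sum_filter, Finset.sum_div, ← Finset.sum_sub_distrib,
      Finset.mul_sum]
    refine Finset.sum_congr rfl fun z _ => ?_
    unfold tau
    split <;> ring
  -- card identities
  have hcardDb : ∀ b, ((Db b).card : ℝ) = ∑ z ∈ Db b, (1:ℝ) := by
    intro b; simp
  have hcardD : N = ∑ z ∈ D, (1:ℝ) := by simp [hNdef]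
  have hcardA : (Fintype.card (Fin k → Bool) : ℝ) = (2:ℝ)^k := by
    simp [Fintype.card_fun]
  -- second moments
  have hSM1 : ∑ b : Fin k → Bool, (∑ z ∈ D, (1:ℝ) * tau z b)^2 ≤ (2:ℝ)^k * N := by
    rw [← hcardA]
    exact second_moment D tau tau_sq tau_corr (fun _ => 1)
      (fun _ => zero_le_one) (fun _ => le_refl 1)
  have hSM2 : ∑ b : Fin k → Bool, (∑ z ∈ D, w z * tau z b)^2 ≤ (2:ℝ)^k * N := by
    rw [← hcardA]
    exact second_moment D tau tau_sq tau_corr w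
      (fun z => by simp only [hw]; split <;> norm_num)
      (fun z => by simp only [hw]; split <;> norm_num)
  -- Cauchy-Schwarz: L1 bounds
  set Q : ℝ := (2:ℝ)^k * Real.sqrt N / 2 with hQdef
  have hsqrtN : (0:ℝ) < Real.sqrt N := Real.sqrt_pos.2 hN0
  have hQeq : Real.sqrt ((2:ℝ)^k * ((2:ℝ)^k * N / 4)) = Q := by
    have h1 : (2:ℝ)^k * ((2:ℝ)^k * N / 4) = ((2:ℝ)^k/2)^2 * N := by ring
    rw [h1, Real.sqrt_mul (by positivity), Real.sqrt_sq (by positivity), hQdef]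
    ring
  have habsbound : ∀ (u : ((Fin k → Bool) × Bool) → ℝ),
      (∑ b : Fin k → Bool, (∑ z ∈ D, u z * tau z b)^2 ≤ (2:ℝ)^k * N) →
      ∑ b : Fin k → Bool, |(1/2:ℝ) * ∑ z ∈ D, u z * tau z b| ≤ Q := by
    intro u hu
    calc ∑ b : Fin k → Bool, |(1/2:ℝ) * ∑ z ∈ D, u z * tau z b|
        ≤ Real.sqrt ((Fintype.card (Fin k → Bool) : ℝ) *
            ∑ b : Fin k → Bool, ((1/2:ℝ) * ∑ z ∈ D, u z * tau z b)^2) :=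
          abs_sum_le_sqrt _
      _ ≤ Real.sqrt ((2:ℝ)^k * ((2:ℝ)^k * N / 4)) := by
          apply Real.sqrt_le_sqrt
          rw [hcardA]
          have : ∑ b : Fin k → Bool, ((1/2:ℝ) * ∑ z ∈ D, u z * tau z b)^2
              = (1/4) * ∑ b : Fin k → Bool, (∑ z ∈ D, u z * tau z b)^2 := by
            rw [Finset.mul_sum]
            exact Finset.sum_congr rfl fun b _ => by ring
          rw [this]
          calc (2:ℝ)^k * ((1/4) * ∑ b : Fin k → Bool, (∑ z ∈ D, u z * tau z b)^2)
              ≤ (2:ℝ)^k * ((1/4) * ((2:ℝ)^k * N)) := by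
                apply mul_le_mul_of_nonneg_left _ (le_of_lt h2k)
                apply mul_le_mul_of_nonneg_left hu (by norm_num)
            _ = (2:ℝ)^k * N / 4 * (2:ℝ)^k := by ring
            _ = (2:ℝ)^k * ((2:ℝ)^k * N / 4) := by ring
      _ = Q := hQeq
  -- pointwise bound on each b-term
  have hpt : ∀ b : Fin k → Bool,
      (if (Db b).Nonempty then
        |(∑ z ∈ Db b, w z) / ((Db b).card : ℝ) - S / N| else 0)
      ≤ 4 / N * (|(∑ z ∈ Db b, w z) - S/2| + |((Db b).card : ℝ) - N/2|) := by
    intro b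
    split
    case isTrue hne =>
      apply ratio_bound
      · exact_mod_cast Finset.card_pos.2 hne
      · exact Finset.sum_nonneg fun z _ => by simp only [hw]; split <;> norm_num
      · rw [hcardDb]
        exact Finset.sum_le_sum fun z _ => by simp only [hw]; split <;> norm_num
      · exact hN1
      · exact Finset.sum_nonneg fun z _ => by simp only [hw]; split <;> norm_num
      · rw [hSdef, hcardD]
        exact Finset.sum_le_sum fun z _ => by simp only [hw]; split <;> norm_num
    case isFalse =>
      positivity
  -- main chain
  have hsum : ∑ b : Fin k → Bool,
      (if (Db b).Nonempty then
        |(∑ z ∈ Db b, w z) / ((Db b).card : ℝ) - S / N| else 0)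
      ≤ 4 / N * (Q + Q) := by
    calc ∑ b : Fin k → Bool,
        (if (Db b).Nonempty then
          |(∑ z ∈ Db b, w z) / ((Db b).card : ℝ) - S / N| else 0)
        ≤ ∑ b : Fin k → Bool,
            4 / N * (|(∑ z ∈ Db b, w z) - S/2| + |((Db b).card : ℝ) - N/2|) :=
          Finset.sum_le_sum fun b _ => hpt b
      _ = 4 / N * (∑ b : Fin k → Bool, |(∑ z ∈ Db b, w z) - S/2|
            + ∑ b : Fin k → Bool, |((Db b).card : ℝ) - N/2|) := by
          rw [← Finset.sum_add_distrib, Finset.mul_sum]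
      _ ≤ 4 / N * (Q + Q) := by
          apply mul_le_mul_of_nonneg_left _ (by positivity)
          apply add_le_add
          · have h1 : ∀ b : Fin k → Bool, |(∑ z ∈ Db b, w z) - S/2|
                = |(1/2:ℝ) * ∑ z ∈ D, w z * tau z b| := fun b => by
              rw [← hGen w b, hSdef]
            rw [Finset.sum_congr rfl fun b _ => h1 b]
            exact habsbound w hSM2
          · have h1 : ∀ b : Fin k → Bool, |((Db b).card : ℝ) - N/2|
                = |(1/2:ℝ) * ∑ z ∈ D, (1:ℝ) * tau z b| := fun b => by
              rw [← hGen (fun _ => (1:ℝ)) b, ← hcardDb, ← hcardD]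
            rw [Finset.sum_congr rfl fun b _ => h1 b]
            exact habsbound _ hSM1
  -- combine with the 1/2^k factor
  have hmain : (1 / (2:ℝ) ^ k) * ∑ b : Fin k → Bool,
      (if (Db b).Nonempty then
        |(∑ z ∈ Db b, w z) / ((Db b).card : ℝ) - S / N| else 0)
      ≤ 4 / Real.sqrt N := by
    have heq : (1 / (2:ℝ) ^ k) * (4 / N * (Q + Q)) = 4 / Real.sqrt N := by
      rw [hQdef]
      have hNs : Real.sqrt N * Real.sqrt N = N := Real.mul_self_sqrt (le_of_lt hN0)
      field_simp
      nlinarith [hNs, hsqrtN, h2k]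
    calc (1 / (2:ℝ) ^ k) * ∑ b : Fin k → Bool,
        (if (Db b).Nonempty then
          |(∑ z ∈ Db b, w z) / ((Db b).card : ℝ) - S / N| else 0)
        ≤ (1 / (2:ℝ) ^ k) * (4 / N * (Q + Q)) := by
          apply mul_le_mul_of_nonneg_left hsum (by positivity)
      _ = 4 / Real.sqrt N := heq
  -- final numeric estimate
  have hfinal : 4 / Real.sqrt N ≤ (2:ℝ) ^ (-(k:ℝ)/9) := by
    have hsqrtlb : (2:ℝ) ^ ((k:ℝ)/4) ≤ Real.sqrt N := by
      have h1 : Real.sqrt ((2:ℝ) ^ ((k:ℝ)/2)) = (2:ℝ) ^ ((k:ℝ)/4) := by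
        rw [Real.sqrt_eq_rpow, ← Real.rpow_mul (by norm_num : (0:ℝ) ≤ 2)]
        congr 1
        ring
      calc (2:ℝ) ^ ((k:ℝ)/4) = Real.sqrt ((2:ℝ) ^ ((k:ℝ)/2)) := h1.symm
        _ ≤ Real.sqrt N := Real.sqrt_le_sqrt hD
    have hpos4 : (0:ℝ) < (2:ℝ) ^ ((k:ℝ)/4) := Real.rpow_pos_of_pos (by norm_num) _
    calc 4 / Real.sqrt N ≤ 4 / (2:ℝ) ^ ((k:ℝ)/4) :=
          div_le_div_of_nonneg_left (by norm_num) hpos4 hsqrtlb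
      _ = (2:ℝ) ^ ((2:ℝ) - (k:ℝ)/4) := by
          rw [Real.rpow_sub (by norm_num : (0:ℝ) < 2)]
          congr 1
          have := Real.rpow_natCast (2:ℝ) 2
          norm_num at this
          linarith
      _ ≤ (2:ℝ) ^ (-(k:ℝ)/9) := by
          apply (Real.rpow_le_rpow_left_iff (x := 2) (by norm_num)).2
          linarith
  calc (1 / (2:ℝ) ^ k) * ∑ b : Fin k → Bool,
      (if (D.filter (fun z => z.2 = ip z.1 b)).Nonempty then
        |(∑ z ∈ D.filter (fun z => z.2 = ip z.1 b), if f z then (1:ℝ) else 0) /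
            (D.filter (fun z => z.2 = ip z.1 b)).card -
          (∑ z ∈ D, if f z then (1:ℝ) else 0) / D.card|
      else 0)
      ≤ 4 / Real.sqrt N := hmain
    _ ≤ (2:ℝ) ^ (-(k:ℝ)/9) := hfinal
end

section
/- Let m ≤ 2^{k/20}, let D ⊆ {0,1}^m with |D| ≥ 2^{m−k/2}, set N_D = |D|, and for M ∈ 𝔽₂^{k×(m−k)} let N_M = |D ∩ {(x, xᵀM) : x ∈ {0,1}^k}|. Then E_{M ∼ U_{k×(m−k)}}[ (N_M/N_D − 2^{−(m−k)})² ] ≤ 2^{−2(m−k)−k/2}·2^{k/10}, and hence with probability at least 1 − 2^{−k/8} over a uniformly random M, |N_M/N_D − 2^{−(m−k)}| ≤ 2^{−k/8}·2^{−(m−k)}. -/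
open Finset
open scoped Classical

lemma fiber_card {G H : Type*} [AddCommGroup G] [AddCommGroup H] [Fintype G] [Fintype H]
    (f : G → H) (hadd : ∀ a b, f (a + b) = f a + f b) (hf : Function.Surjective f) (h : H) :
    (univ.filter fun g => f g = h).card * Fintype.card H = Fintype.card G := by
  classical
  have key : ∀ h₁ h₂ : H, (univ.filter fun g => f g = h₁).card = (univ.filter fun g => f g = h₂).card := by
    intro h₁ h₂
    obtain ⟨g₀, hg₀⟩ := hf (h₂ - h₁)
    apply Finset.card_bij (fun g _ => g + g₀)
    · intro a ha
      simp only [mem_filter, mem_univ, true_and] at ha ⊢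
      rw [hadd, ha, hg₀]; abel
    · intro a _ b _ hab
      exact add_right_cancel hab
    · intro b hb
      simp only [mem_filter, mem_univ, true_and] at hb
      refine ⟨b - g₀, ?_, by abel⟩
      simp only [mem_filter, mem_univ, true_and]
      have h2 := hadd (b - g₀) g₀
      rw [sub_add_cancel, hb, hg₀] at h2
      have h3 : f (b - g₀) = h₂ - (h₂ - h₁) := by
        rw [eq_sub_iff_add_eq, ← h2]
      rw [h3]; abel
  have hpart : (univ : Finset G).card = ∑ b : H, (univ.filter fun g => f g = b).card :=
    Finset.card_eq_sum_card_fiberwise (fun x _ => mem_univ _)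
  rw [card_univ] at hpart
  rw [hpart, Finset.sum_congr rfl (fun b _ => key b h), Finset.sum_const, card_univ, smul_eq_mul,
    mul_comm]

lemma zmod2_eq_one {a : ZMod 2} (h : a ≠ 0) : a = 1 := by
  revert h; revert a; decide

lemma phi_add {k n : ℕ} (x : Fin k → ZMod 2) (M N : Fin k → Fin n → ZMod 2) :
    (fun j => ∑ i, x i * (M + N) i j) =
      (fun j => ∑ i, x i * M i j) + (fun j => ∑ i, x i * N i j) := by
  funext j
  simp [Pi.add_apply, mul_add, Finset.sum_add_distrib]

lemma card_mat {k n : ℕ} : Fintype.card (Fin k → Fin n → ZMod 2) = 2 ^ (k * n) := by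
  simp only [Fintype.card_fun, Fintype.card_pi, ZMod.card]
  rw [← pow_mul, mul_comm]
  simp

lemma card_vec {n : ℕ} : Fintype.card (Fin n → ZMod 2) = 2 ^ n := by
  simp [Fintype.card_fun]

lemma phi_surj {k n : ℕ} (x : Fin k → ZMod 2) (hx : x ≠ 0) :
    Function.Surjective (fun M : Fin k → Fin n → ZMod 2 => fun j => ∑ i, x i * M i j) := by
  obtain ⟨i₀, hi₀⟩ := Function.ne_iff.mp hx
  have hx1 : x i₀ = 1 := zmod2_eq_one hi₀
  intro u
  refine ⟨fun i j => if i = i₀ then u j else 0, ?_⟩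
  funext j
  simp only [mul_ite, mul_zero]
  rw [Finset.sum_ite_eq' univ i₀ (fun i => x i * u j)]
  simp [hx1]

lemma count_single {k n : ℕ} (x : Fin k → ZMod 2) (hx : x ≠ 0) (u : Fin n → ZMod 2) :
    (univ.filter fun M : Fin k → Fin n → ZMod 2 => u = fun j => ∑ i, x i * M i j).card * 2 ^ n
      = 2 ^ (k * n) := by
  have h := fiber_card (fun M : Fin k → Fin n → ZMod 2 => fun j => ∑ i, x i * M i j)
    (fun a b => phi_add x a b) (phi_surj x hx) u
  rw [card_vec, card_mat] at h
  rw [← h]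
  have e : (univ.filter fun M : Fin k → Fin n → ZMod 2 => u = fun j => ∑ i, x i * M i j)
      = (univ.filter fun M : Fin k → Fin n → ZMod 2 => (fun j => ∑ i, x i * M i j) = u) :=
    Finset.filter_congr (fun M _ => eq_comm)
  rw [e]
  convert h using 4

lemma pair_surj_aux {k n : ℕ} (x y : Fin k → ZMod 2) (i₀ : Fin k) (hx0 : x i₀ = 1)
    (hy0 : y i₀ = 0) (hy : y ≠ 0) :
    Function.Surjective (fun M : Fin k → Fin n → ZMod 2 =>
      ((fun j => ∑ i, x i * M i j), (fun j => ∑ i, y i * M i j))) := by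
  obtain ⟨i₁, hi₁⟩ := Function.ne_iff.mp hy
  have hy1 : y i₁ = 1 := zmod2_eq_one hi₁
  have hne : i₁ ≠ i₀ := by rintro rfl; rw [hy1] at hy0; exact one_ne_zero hy0
  rintro ⟨u, v⟩
  refine ⟨fun i j => (if i = i₀ then u j - x i₁ * v j else 0) + (if i = i₁ then v j else 0), ?_⟩
  have e1 : ∀ (w : Fin k → ZMod 2) (j : Fin n),
      (∑ i, w i * ((if i = i₀ then u j - x i₁ * v j else 0) + (if i = i₁ then v j else 0)))
        = w i₀ * (u j - x i₁ * v j) + w i₁ * v j := by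
    intro w j
    simp only [mul_add, mul_ite, mul_zero]
    rw [Finset.sum_add_distrib, Finset.sum_ite_eq' univ i₀ (fun i => w i * (u j - x i₁ * v j)),
      Finset.sum_ite_eq' univ i₁ (fun i => w i * v j)]
    simp
  refine Prod.ext ?_ ?_ <;> funext j <;> simp only [e1]
  · rw [hx0]; ring
  · rw [hy0, hy1]; ring
lemma pair_surj {k n : ℕ} (x y : Fin k → ZMod 2) (hx : x ≠ 0) (hy : y ≠ 0) (hxy : x ≠ y) :
    Function.Surjective (fun M : Fin k → Fin n → ZMod 2 =>
      ((fun j => ∑ i, x i * M i j), (fun j => ∑ i, y i * M i j))) := by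
  obtain ⟨i₀, hi₀⟩ := Function.ne_iff.mp hxy
  rcases eq_or_ne (x i₀) 0 with hx0 | hx0
  · have hy1 : y i₀ = 1 := zmod2_eq_one (fun h => hi₀ (by rw [hx0, h]))
    have hs := pair_surj_aux (n := n) y x i₀ hy1 hx0 hx
    rintro ⟨u, v⟩
    obtain ⟨M, hM⟩ := hs (v, u)
    exact ⟨M, by rw [Prod.ext_iff] at hM ⊢; exact ⟨hM.2, hM.1⟩⟩
  · have hx1 : x i₀ = 1 := zmod2_eq_one hx0
    have hy0 : y i₀ = 0 := by
      rcases eq_or_ne (y i₀) 0 with h | h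
      · exact h
      · exact absurd (by rw [hx1, zmod2_eq_one h]) hi₀
    exact pair_surj_aux x y i₀ hx1 hy0 hy

lemma pair_add {k n : ℕ} (x y : Fin k → ZMod 2) (M N : Fin k → Fin n → ZMod 2) :
    ((fun j => ∑ i, x i * (M + N) i j), (fun j => ∑ i, y i * (M + N) i j))
      = ((fun j => ∑ i, x i * M i j), (fun j => ∑ i, y i * M i j))
        + ((fun j => ∑ i, x i * N i j), (fun j => ∑ i, y i * N i j)) := by
  rw [Prod.ext_iff]
  exact ⟨phi_add x M N, phi_add y M N⟩

lemma count_pair {k n : ℕ} (x y : Fin k → ZMod 2) (hx : x ≠ 0) (hy : y ≠ 0) (hxy : x ≠ y)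
    (u v : Fin n → ZMod 2) :
    (univ.filter fun M : Fin k → Fin n → ZMod 2 =>
        (u = fun j => ∑ i, x i * M i j) ∧ (v = fun j => ∑ i, y i * M i j)).card * (2 ^ n * 2 ^ n)
      = 2 ^ (k * n) := by
  have h := fiber_card (fun M : Fin k → Fin n → ZMod 2 =>
      ((fun j => ∑ i, x i * M i j), (fun j => ∑ i, y i * M i j)))
    (fun a b => pair_add x y a b) (pair_surj x y hx hy hxy) (u, v)
  rw [card_mat, Fintype.card_prod, card_vec] at h
  rw [← h]
  have e : (univ.filter fun M : Fin k → Fin n → ZMod 2 =>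
        (u = fun j => ∑ i, x i * M i j) ∧ (v = fun j => ∑ i, y i * M i j))
      = (univ.filter fun M : Fin k → Fin n → ZMod 2 =>
        ((fun j => ∑ i, x i * M i j), (fun j => ∑ i, y i * M i j)) = (u, v)) := by
    apply Finset.filter_congr
    intro M _
    rw [Prod.ext_iff]
    constructor
    · rintro ⟨h1, h2⟩; exact ⟨h1.symm, h2.symm⟩
    · rintro ⟨h1, h2⟩; exact ⟨h1.symm, h2.symm⟩
  rw [e]
  convert rfl using 4
set_option maxHeartbeats 1000000 in
lemma big_case {k n : ℕ} (hk : 40 ≤ k) (D : Finset ((Fin k → ZMod 2) × (Fin n → ZMod 2)))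
    (hD : (2:ℝ) ^ ((n:ℝ) + (k:ℝ)/2) ≤ D.card) :
    (1 / (2:ℝ) ^ (k * n)) * ∑ M : Fin k → Fin n → ZMod 2,
        (((D.filter (fun z => z.2 = fun j => ∑ i, z.1 i * M i j)).card : ℝ) / D.card
          - (2:ℝ) ^ (-(n:ℝ))) ^ 2
      ≤ (2:ℝ) ^ (-2*(n:ℝ) - (k:ℝ)/2) * (2:ℝ) ^ ((k:ℝ)/10) := by
  classical
  set q : ℝ := ((2:ℝ) ^ n)⁻¹ with hqdef
  have hqr : q = (2:ℝ) ^ (-(n:ℝ)) := by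
    rw [hqdef, ← Real.rpow_natCast 2 n, ← Real.rpow_neg two_pos.le]
  have hqpos : 0 < q := by positivity
  have hDpos : (0:ℝ) < D.card := lt_of_lt_of_le (by positivity) hD
  set T : ℝ := (2:ℝ) ^ (k * n) with hTdef
  have hTpos : 0 < T := by positivity
  set D1 := D.filter (fun z => ¬ (z.1 = 0)) with hD1def
  set A1 : ℝ := (D1.card : ℝ) with hA1def
  set d0 : ℕ := (D.filter (fun z => z.1 = 0 ∧ z.2 = 0)).card with hd0def
  set A0 : ℝ := ((D.filter (fun z => z.1 = 0)).card : ℝ) with hA0def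
  have hA1nn : 0 ≤ A1 := by positivity
  have hsplit : A0 + A1 = (D.card : ℝ) := by
    rw [hA0def, hA1def, hD1def]
    exact_mod_cast congrArg (Nat.cast (R := ℝ))
      (Finset.card_filter_add_card_filter_not (s := D) (p := fun z => z.1 = 0))
  have hd0le : d0 ≤ 1 := by
    rw [hd0def]
    apply Finset.card_le_one.mpr
    intro a ha b hb
    simp only [mem_filter] at ha hb
    exact Prod.ext (ha.2.1.trans hb.2.1.symm) (ha.2.2.trans hb.2.2.symm)
  have hA0le : A0 ≤ (2:ℝ)^n := by
    rw [hA0def]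
    have : (D.filter (fun z => z.1 = 0)).card ≤ (univ : Finset (Fin n → ZMod 2)).card := by
      apply Finset.card_le_card_of_injOn (fun z => z.2) (fun z _ => mem_univ _)
      intro z hz w hw h2
      simp only [coe_filter, Set.mem_setOf_eq] at hz hw
      exact Prod.ext (hz.2.trans hw.2.symm) h2
    rw [card_univ, card_vec] at this
    exact_mod_cast this
  -- counting lemmas, real versions
  have hcnt1 : ∀ z : (Fin k → ZMod 2) × (Fin n → ZMod 2), z ∈ D1 →
      ((univ.filter fun M : Fin k → Fin n → ZMod 2 =>
        z.2 = fun j => ∑ i, z.1 i * M i j).card : ℝ) = T * q := by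
    intro z hz
    have hz1 : z.1 ≠ 0 := (Finset.mem_filter.mp hz).2
    have h := count_single z.1 hz1 z.2
    have h' : ((univ.filter fun M : Fin k → Fin n → ZMod 2 =>
        z.2 = fun j => ∑ i, z.1 i * M i j).card : ℝ) * 2^n = 2^(k*n) := by exact_mod_cast h
    have h'' : ((univ.filter fun M : Fin k → Fin n → ZMod 2 =>
        z.2 = fun j => ∑ i, z.1 i * M i j).card : ℝ) = 2^(k*n) / 2^n := by
      rw [eq_div_iff (by positivity : ((2:ℝ)^n) ≠ 0)]; exact h'
    rw [h'', hTdef, hqdef, div_eq_mul_inv]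
  have hcnt2 : ∀ z ∈ D1, ∀ w ∈ D1,
      ((univ.filter fun M : Fin k → Fin n → ZMod 2 =>
        (z.2 = fun j => ∑ i, z.1 i * M i j) ∧ (w.2 = fun j => ∑ i, w.1 i * M i j)).card : ℝ)
      ≤ (if z = w then T*q else 0) + T*q*q := by
    intro z hz w hw
    have hz1 : z.1 ≠ 0 := (Finset.mem_filter.mp hz).2
    have hw1 : w.1 ≠ 0 := (Finset.mem_filter.mp hw).2
    by_cases hzw : z = w
    · subst hzw
      simp only [if_pos rfl, and_self, if_true]
      rw [hcnt1 z hz]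
      nlinarith [mul_pos (mul_pos hTpos hqpos) hqpos]
    · rw [if_neg hzw, zero_add]
      by_cases h11 : z.1 = w.1
      · have h22 : z.2 ≠ w.2 := fun h => hzw (Prod.ext h11 h)
        have : (univ.filter fun M : Fin k → Fin n → ZMod 2 =>
            (z.2 = fun j => ∑ i, z.1 i * M i j) ∧ (w.2 = fun j => ∑ i, w.1 i * M i j)) = ∅ := by
          apply Finset.filter_eq_empty_iff.mpr
          intro M _
          rw [h11]
          rintro ⟨h1, h2⟩
          exact h22 (h1.trans h2.symm)
        rw [this]
        simp only [Finset.card_empty, Nat.cast_zero]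
        positivity
      · have h := count_pair z.1 w.1 hz1 hw1 h11 z.2 w.2
        have h' : ((univ.filter fun M : Fin k → Fin n → ZMod 2 =>
            (z.2 = fun j => ∑ i, z.1 i * M i j) ∧ (w.2 = fun j => ∑ i, w.1 i * M i j)).card : ℝ)
            * (2^n * 2^n) = 2^(k*n) := by exact_mod_cast h
        have h'' : ((univ.filter fun M : Fin k → Fin n → ZMod 2 =>
            (z.2 = fun j => ∑ i, z.1 i * M i j) ∧ (w.2 = fun j => ∑ i, w.1 i * M i j)).card : ℝ)
            = 2^(k*n) / (2^n * 2^n) := by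
          rw [eq_div_iff (by positivity : ((2:ℝ)^n * 2^n) ≠ 0)]; exact h'
        rw [h'', hTdef, hqdef]
        rw [div_eq_mul_inv, mul_inv]
        exact le_of_eq (by ring)
  set N1 : (Fin k → Fin n → ZMod 2) → ℕ :=
    fun M => (D1.filter (fun z => z.2 = fun j => ∑ i, z.1 i * M i j)).card with hN1def
  have key0 : ∀ M : Fin k → Fin n → ZMod 2,
      (D.filter (fun z => z.2 = fun j => ∑ i, z.1 i * M i j)).card = N1 M + d0 := by
    intro M
    have hpart := Finset.card_filter_add_card_filter_not
      (s := D.filter (fun z => z.2 = fun j => ∑ i, z.1 i * M i j)) (p := fun z => ¬ (z.1 = 0))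
    have e1 : (D.filter (fun z => z.2 = fun j => ∑ i, z.1 i * M i j)).filter (fun z => ¬ (z.1 = 0))
        = D1.filter (fun z => z.2 = fun j => ∑ i, z.1 i * M i j) := by
      rw [hD1def, Finset.filter_filter, Finset.filter_filter]
      exact Finset.filter_congr (fun z _ => and_comm)
    have e2 : (D.filter (fun z => z.2 = fun j => ∑ i, z.1 i * M i j)).filter
          (fun z => ¬ ¬ (z.1 = 0))
        = D.filter (fun z => z.1 = 0 ∧ z.2 = 0) := by
      rw [Finset.filter_filter]
      apply Finset.filter_congr
      intro z _
      simp only [not_not]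
      constructor
      · rintro ⟨h1, h0⟩
        refine ⟨h0, ?_⟩
        rw [h1]
        funext j
        exact Finset.sum_eq_zero (fun i _ => by rw [congrFun h0 i]; exact zero_mul _)
      · rintro ⟨h0, h2⟩
        refine ⟨?_, h0⟩
        rw [h2]
        funext j
        symm
        exact Finset.sum_eq_zero (fun i _ => by rw [congrFun h0 i]; exact zero_mul _)
    rw [e1, e2] at hpart
    rw [← hpart, hN1def, hd0def]
  have key1 : ∑ M : Fin k → Fin n → ZMod 2, (N1 M : ℝ) = A1 * (T * q) := by
    have e : ∀ M : Fin k → Fin n → ZMod 2, (N1 M : ℝ)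
        = ∑ z ∈ D1, if z.2 = (fun j => ∑ i, z.1 i * M i j) then (1:ℝ) else 0 := by
      intro M
      rw [Finset.sum_boole, hN1def]
    rw [Finset.sum_congr rfl (fun M _ => e M), Finset.sum_comm]
    rw [Finset.sum_congr rfl (fun z hz => by rw [Finset.sum_boole, hcnt1 z hz] :
      ∀ z ∈ D1, (∑ M : Fin k → Fin n → ZMod 2,
        if z.2 = (fun j => ∑ i, z.1 i * M i j) then (1:ℝ) else 0) = T * q)]
    rw [Finset.sum_const, nsmul_eq_mul, hA1def]
  have key2 : ∑ M : Fin k → Fin n → ZMod 2, ((N1 M : ℝ))^2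
      ≤ A1 * (T * q) + A1 * (A1 * (T*q*q)) := by
    have e : ∀ M : Fin k → Fin n → ZMod 2, ((N1 M : ℝ))^2
        = ∑ z ∈ D1, ∑ w ∈ D1,
          if (z.2 = fun j => ∑ i, z.1 i * M i j) ∧ (w.2 = fun j => ∑ i, w.1 i * M i j)
            then (1:ℝ) else 0 := by
      intro M
      have e1 : (N1 M : ℝ)
          = ∑ z ∈ D1, if z.2 = (fun j => ∑ i, z.1 i * M i j) then (1:ℝ) else 0 := by
        rw [Finset.sum_boole, hN1def]
      rw [sq, e1, Finset.sum_mul_sum]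
      refine Finset.sum_congr rfl (fun z _ => Finset.sum_congr rfl (fun w _ => ?_))
      by_cases h1 : z.2 = fun j => ∑ i, z.1 i * M i j
      · by_cases h2 : w.2 = fun j => ∑ i, w.1 i * M i j
        · rw [if_pos h1, if_pos h2, if_pos ⟨h1, h2⟩, mul_one]
        · rw [if_pos h1, if_neg h2, mul_zero, if_neg]
          rintro ⟨-, hh⟩; exact h2 hh
      · rw [if_neg h1, zero_mul, if_neg]
        rintro ⟨hh, -⟩; exact h1 hh
    rw [Finset.sum_congr rfl (fun M _ => e M)]
    rw [Finset.sum_comm]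
    have swap2 : ∀ z ∈ D1, (∑ M : Fin k → Fin n → ZMod 2, ∑ w ∈ D1,
          if (z.2 = fun j => ∑ i, z.1 i * M i j) ∧ (w.2 = fun j => ∑ i, w.1 i * M i j)
            then (1:ℝ) else 0)
        = ∑ w ∈ D1, ((univ.filter fun M : Fin k → Fin n → ZMod 2 =>
            (z.2 = fun j => ∑ i, z.1 i * M i j) ∧ (w.2 = fun j => ∑ i, w.1 i * M i j)).card : ℝ) := by
      intro z _
      rw [Finset.sum_comm]
      exact Finset.sum_congr rfl (fun w _ => Finset.sum_boole _ _)
    rw [Finset.sum_congr rfl swap2]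
    calc ∑ z ∈ D1, ∑ w ∈ D1, ((univ.filter fun M : Fin k → Fin n → ZMod 2 =>
            (z.2 = fun j => ∑ i, z.1 i * M i j) ∧ (w.2 = fun j => ∑ i, w.1 i * M i j)).card : ℝ)
        ≤ ∑ z ∈ D1, ∑ w ∈ D1, ((if z = w then T*q else 0) + T*q*q) := by
          exact Finset.sum_le_sum (fun z hz => Finset.sum_le_sum (fun w hw => hcnt2 z hz w hw))
      _ = A1 * (T * q) + A1 * (A1 * (T*q*q)) := by
          rw [Finset.sum_congr rfl (fun z hz => by
            rw [Finset.sum_add_distrib, Finset.sum_ite_eq D1 z (fun _ => T*q), if_pos hz,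
              Finset.sum_const, nsmul_eq_mul] :
            ∀ z ∈ D1, (∑ w ∈ D1, ((if z = w then T*q else 0) + T*q*q))
              = T*q + (D1.card : ℝ) * (T*q*q))]
          rw [Finset.sum_const, nsmul_eq_mul, hA1def]
          ring
  have hTcard : ((univ : Finset (Fin k → Fin n → ZMod 2)).card : ℝ) = T := by
    rw [card_univ, card_mat, hTdef]
    push_cast
    ring
  have keyvar : ∑ M : Fin k → Fin n → ZMod 2, ((N1 M : ℝ) - q * A1)^2 ≤ A1 * (T * q) := by
    have hsplitsum : ∑ M : Fin k → Fin n → ZMod 2, ((N1 M : ℝ) - q * A1)^2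
        = (∑ M : Fin k → Fin n → ZMod 2, (N1 M : ℝ)^2)
          - 2*(q*A1)*(∑ M : Fin k → Fin n → ZMod 2, (N1 M : ℝ)) + T * (q*A1)^2 := by
      rw [Finset.mul_sum, ← Finset.sum_sub_distrib]
      have e0 : T * (q*A1)^2 = ∑ _M : Fin k → Fin n → ZMod 2, (q*A1)^2 := by
        rw [Finset.sum_const, nsmul_eq_mul, hTcard]
      rw [e0, ← Finset.sum_add_distrib]
      exact Finset.sum_congr rfl (fun M _ => by ring)
    rw [hsplitsum, key1]
    have : A1 * (T * q) + A1 * (A1 * (T*q*q)) - 2*(q*A1)*(A1 * (T * q)) + T * (q*A1)^2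
        = A1 * (T * q) := by ring
    linarith [key2]
  have hbias : ((d0:ℝ) - q * A0)^2 ≤ 1 := by
    have h1 : (0:ℝ) ≤ (d0:ℝ) := Nat.cast_nonneg _
    have h2 : (d0:ℝ) ≤ 1 := by exact_mod_cast hd0le
    have h3 : 0 ≤ q * A0 := by positivity
    have h4 : q * A0 ≤ 1 := by
      rw [hqdef]
      rw [inv_mul_le_iff₀ (by positivity)]
      simpa using hA0le
    nlinarith
  -- the summed bound
  have hsum : ∑ M : Fin k → Fin n → ZMod 2,
      (((D.filter (fun z => z.2 = fun j => ∑ i, z.1 i * M i j)).card : ℝ) / D.card - q) ^ 2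
      ≤ (2 * (A1 * (T * q)) + 2 * T) / ((D.card : ℝ))^2 := by
    have hpoint : ∀ M : Fin k → Fin n → ZMod 2,
        (((D.filter (fun z => z.2 = fun j => ∑ i, z.1 i * M i j)).card : ℝ) / D.card - q) ^ 2
        = (((N1 M : ℝ) - q * A1) + ((d0:ℝ) - q * A0))^2 / ((D.card : ℝ))^2 := by
      intro M
      rw [key0 M]
      push_cast
      rw [div_sub' (ne_of_gt hDpos), ← hsplit]
      rw [div_pow]
      congr 1
      ring
    rw [Finset.sum_congr rfl (fun M _ => hpoint M)]
    rw [← Finset.sum_div]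
    apply div_le_div_of_nonneg_right ?_ (by positivity)
    calc ∑ M : Fin k → Fin n → ZMod 2, (((N1 M : ℝ) - q * A1) + ((d0:ℝ) - q * A0))^2
        ≤ ∑ M : Fin k → Fin n → ZMod 2,
            (2*((N1 M : ℝ) - q * A1)^2 + 2*((d0:ℝ) - q * A0)^2) := by
          apply Finset.sum_le_sum
          intro M _
          nlinarith [sq_nonneg (((N1 M : ℝ) - q * A1) - ((d0:ℝ) - q * A0))]
      _ = 2 * (∑ M : Fin k → Fin n → ZMod 2, ((N1 M : ℝ) - q * A1)^2)
            + T * (2*((d0:ℝ) - q * A0)^2) := by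
          rw [Finset.sum_add_distrib, ← Finset.mul_sum, Finset.sum_const, nsmul_eq_mul, hTcard]
      _ ≤ 2 * (A1 * (T * q)) + 2 * T := by
          have h5 : T * (2*((d0:ℝ) - q * A0)^2) ≤ T * 2 :=
            mul_le_mul_of_nonneg_left (by linarith [hbias]) hTpos.le
          linarith [keyvar]
  -- final arithmetic
  rw [← hqr]
  have hA1le : A1 ≤ (D.card : ℝ) := by
    rw [hA1def, hD1def]
    exact_mod_cast Finset.card_le_card (Finset.filter_subset _ _)
  have hc1 : (0:ℝ) < (2:ℝ) ^ (-2*(n:ℝ) - (k:ℝ)/2) * (2:ℝ) ^ ((k:ℝ)/10) := by positivity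
  have e1 : ((2:ℝ) ^ (-2*(n:ℝ) - (k:ℝ)/2) * (2:ℝ) ^ ((k:ℝ)/10)) * (2:ℝ) ^ ((n:ℝ) + (k:ℝ)/2)
      = q * (2:ℝ) ^ ((k:ℝ)/10) := by
    have e : -2*(n:ℝ) - (k:ℝ)/2 + ((n:ℝ) + (k:ℝ)/2) = -(n:ℝ) := by ring
    rw [mul_right_comm, ← Real.rpow_add two_pos, e, hqr]
  have e2 : (2:ℝ) ^ ((n:ℝ) + (k:ℝ)/2) * q = (2:ℝ) ^ ((k:ℝ)/2) := by
    have e : (n:ℝ) + (k:ℝ)/2 + -(n:ℝ) = (k:ℝ)/2 := by ring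
    rw [hqr, ← Real.rpow_add two_pos, e]
  have h16 : (16:ℝ) ≤ (2:ℝ) ^ ((k:ℝ)/10) := by
    have h4 : (2:ℝ) ^ ((4:ℕ):ℝ) ≤ (2:ℝ) ^ ((k:ℝ)/10) := by
      apply Real.rpow_le_rpow_of_exponent_le one_le_two
      have : (40:ℝ) ≤ (k:ℝ) := by exact_mod_cast hk
      push_cast
      linarith
    rw [Real.rpow_natCast] at h4
    norm_num at h4
    exact h4
  have h1R : (1:ℝ) ≤ (D.card : ℝ) * q := by
    have ha : (2:ℝ) ^ ((0:ℝ)) ≤ (2:ℝ) ^ ((k:ℝ)/2) :=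
      Real.rpow_le_rpow_of_exponent_le one_le_two (by positivity)
    rw [Real.rpow_zero] at ha
    calc (1:ℝ) ≤ (2:ℝ) ^ ((k:ℝ)/2) := ha
      _ = (2:ℝ) ^ ((n:ℝ) + (k:ℝ)/2) * q := e2.symm
      _ ≤ (D.card : ℝ) * q := mul_le_mul_of_nonneg_right hD hqpos.le
  calc (1 / T) * ∑ M : Fin k → Fin n → ZMod 2,
        (((D.filter (fun z => z.2 = fun j => ∑ i, z.1 i * M i j)).card : ℝ) / D.card - q) ^ 2
      ≤ (1 / T) * ((2 * (A1 * (T * q)) + 2 * T) / ((D.card : ℝ))^2) := by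
        apply mul_le_mul_of_nonneg_left hsum (by positivity)
    _ = (2 * (A1 * q) + 2) / ((D.card : ℝ))^2 := by
        field_simp
    _ ≤ (2 * ((D.card : ℝ) * q) + 2) / ((D.card : ℝ))^2 := by
        apply div_le_div_of_nonneg_right ?_ (by positivity)
        have : A1 * q ≤ (D.card : ℝ) * q := mul_le_mul_of_nonneg_right hA1le hqpos.le
        linarith
    _ ≤ (2:ℝ) ^ (-2*(n:ℝ) - (k:ℝ)/2) * (2:ℝ) ^ ((k:ℝ)/10) := by
        rw [div_le_iff₀ (by positivity)]
        have s1 : q * (2:ℝ)^((k:ℝ)/10) * (D.card : ℝ)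
            ≤ ((2:ℝ) ^ (-2*(n:ℝ) - (k:ℝ)/2) * (2:ℝ) ^ ((k:ℝ)/10)) * ((D.card : ℝ))^2 := by
          calc q * (2:ℝ)^((k:ℝ)/10) * (D.card : ℝ)
              = (((2:ℝ) ^ (-2*(n:ℝ) - (k:ℝ)/2) * (2:ℝ) ^ ((k:ℝ)/10)) * (2:ℝ) ^ ((n:ℝ) + (k:ℝ)/2))
                * (D.card : ℝ) := by rw [e1]
            _ ≤ (((2:ℝ) ^ (-2*(n:ℝ) - (k:ℝ)/2) * (2:ℝ) ^ ((k:ℝ)/10)) * (D.card : ℝ))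
                * (D.card : ℝ) :=
                mul_le_mul_of_nonneg_right (mul_le_mul_of_nonneg_left hD hc1.le) hDpos.le
            _ = ((2:ℝ) ^ (-2*(n:ℝ) - (k:ℝ)/2) * (2:ℝ) ^ ((k:ℝ)/10)) * ((D.card : ℝ))^2 := by
                ring
        have s2 : 2 * ((D.card : ℝ) * q) + 2 ≤ 16 * ((D.card : ℝ) * q) := by linarith
        have s3 : 16 * ((D.card : ℝ) * q) ≤ (2:ℝ)^((k:ℝ)/10) * ((D.card : ℝ) * q) :=
          mul_le_mul_of_nonneg_right h16 (by positivity)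
        have s4 : (2:ℝ)^((k:ℝ)/10) * ((D.card : ℝ) * q) = q * (2:ℝ)^((k:ℝ)/10) * (D.card : ℝ) := by
          ring
        linarith
/-- with `m ≤ 2^{k/20}` and `D ⊆ {0,1}^m`, `|D| ≥ 2^{m−k/2}`,
`E_M[(N_M/N_D − 2^{−(m−k)})²] ≤ 2^{−2(m−k)−k/2}·2^{k/10}`, and with probability at
least `1 − 2^{−k/8}` over a uniform matrix `M`,
`|N_M/N_D − 2^{−(m−k)}| ≤ 2^{−k/8}·2^{−(m−k)}`. -/
theorem stmt11 (k m : ℕ) (hkm : k ≤ m) (hm : (m:ℝ) ≤ 2 ^ ((k:ℝ)/20))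
    (D : Finset ((Fin k → ZMod 2) × (Fin (m - k) → ZMod 2)))
    (hD : (2:ℝ) ^ ((m:ℝ) - (k:ℝ)/2) ≤ D.card) :
    ((1 / (2:ℝ) ^ (k * (m - k))) * ∑ M : Fin k → Fin (m - k) → ZMod 2,
        (((D.filter (fun z => z.2 = fun j => ∑ i, z.1 i * M i j)).card : ℝ) / D.card
          - (2:ℝ) ^ (-((m:ℝ) - k))) ^ 2
      ≤ (2:ℝ) ^ (-2*((m:ℝ) - k) - (k:ℝ)/2) * (2:ℝ) ^ ((k:ℝ)/10)) ∧
    ((1 - (2:ℝ) ^ (-(k:ℝ)/8)) * 2 ^ (k * (m - k)) ≤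
      ((Finset.univ.filter (fun M : Fin k → Fin (m - k) → ZMod 2 =>
        |((D.filter (fun z => z.2 = fun j => ∑ i, z.1 i * M i j)).card : ℝ) / D.card
          - (2:ℝ) ^ (-((m:ℝ) - k))|
          ≤ (2:ℝ) ^ (-(k:ℝ)/8) * (2:ℝ) ^ (-((m:ℝ) - k)))).card : ℝ)) := by
  classical
  have hDpos : (0:ℝ) < D.card := lt_of_lt_of_le (by positivity) hD
  have hcast : ((m - k : ℕ) : ℝ) = (m:ℝ) - (k:ℝ) := by
    rw [Nat.cast_sub hkm]
  have part1 : (1 / (2:ℝ) ^ (k * (m - k))) * ∑ M : Fin k → Fin (m - k) → ZMod 2,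
        (((D.filter (fun z => z.2 = fun j => ∑ i, z.1 i * M i j)).card : ℝ) / D.card
          - (2:ℝ) ^ (-((m:ℝ) - k))) ^ 2
      ≤ (2:ℝ) ^ (-2*((m:ℝ) - k) - (k:ℝ)/2) * (2:ℝ) ^ ((k:ℝ)/10) := by
    by_cases hk40 : 40 ≤ k
    · rw [show -((m:ℝ) - k) = -(((m - k : ℕ)):ℝ) by rw [hcast],
        show -2*((m:ℝ) - k) - (k:ℝ)/2 = -2*(((m - k : ℕ)):ℝ) - (k:ℝ)/2 by rw [hcast]]
      apply big_case hk40 D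
      have e : (((m - k : ℕ)):ℝ) + (k:ℝ)/2 = (m:ℝ) - (k:ℝ)/2 := by rw [hcast]; ring
      rw [e]
      exact hD
    · -- small case : k ≤ 1 and m ≤ 1
      have hk1 : k ≤ 1 := by
        by_contra hk2
        push_neg at hk2
        have h39 : (k:ℝ) ≤ 39 := by
          have : k ≤ 39 := by omega
          exact_mod_cast this
        have hb : (2:ℝ)^((k:ℝ)/20) < (2:ℝ)^((2:ℝ)) :=
          Real.rpow_lt_rpow_of_exponent_lt one_lt_two (by linarith)
        have h4 : (2:ℝ)^((2:ℝ)) = 4 := by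
          rw [show ((2:ℝ)) = (((2:ℕ)):ℝ) by norm_num, Real.rpow_natCast]
          norm_num
        have hm4 : m < 4 := by
          have : (m:ℝ) < 4 := by linarith
          exact_mod_cast this
        have hk3 : (k:ℝ) ≤ 3 := by
          have : k ≤ 3 := by omega
          exact_mod_cast this
        have hb2 : (2:ℝ)^((k:ℝ)/20) < (2:ℝ)^((1:ℝ)) :=
          Real.rpow_lt_rpow_of_exponent_lt one_lt_two (by linarith)
        rw [Real.rpow_one] at hb2
        have : m < 2 := by
          have : (m:ℝ) < 2 := by linarith
          exact_mod_cast this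
        omega
      have hm1 : m ≤ 1 := by
        have hkr : (k:ℝ) ≤ 1 := by exact_mod_cast hk1
        have hb2 : (2:ℝ)^((k:ℝ)/20) < (2:ℝ)^((1:ℝ)) :=
          Real.rpow_lt_rpow_of_exponent_lt one_lt_two (by linarith)
        rw [Real.rpow_one] at hb2
        have : m < 2 := by
          have : (m:ℝ) < 2 := by linarith
          exact_mod_cast this
        omega
      rcases (by omega : m = k ∨ (k = 0 ∧ m = 1)) with hmk | ⟨hk0, hm0⟩
      · subst hmk
        have hone : ∀ M : Fin m → Fin (m - m) → ZMod 2,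
            (D.filter (fun z => z.2 = fun j => ∑ i, z.1 i * M i j)) = D := by
          intro M
          apply Finset.filter_true_of_mem
          intro z _
          funext j
          exact absurd j.isLt (by omega)
        have hzero : ∀ M : Fin m → Fin (m - m) → ZMod 2,
            (((D.filter (fun z => z.2 = fun j => ∑ i, z.1 i * M i j)).card : ℝ) / D.card
              - (2:ℝ) ^ (-((m:ℝ) - m))) ^ 2 = 0 := by
          intro M
          rw [hone M, div_self (ne_of_gt hDpos),
            show -((m:ℝ) - (m:ℝ)) = 0 by ring, Real.rpow_zero]
          ring
        rw [Finset.sum_congr rfl (fun M _ => hzero M), Finset.sum_const]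
        simp only [smul_zero, mul_zero]
        positivity
      · subst hk0
        subst hm0
        have hc2 : Fintype.card ((Fin 0 → ZMod 2) × (Fin (1 - 0) → ZMod 2)) = 2 := by
          simp
        have hD2 : 2 ≤ D.card := by
          have h2 : (2:ℝ) ≤ (D.card : ℝ) := by
            have e : ((1:ℕ):ℝ) - ((0:ℕ):ℝ)/2 = 1 := by norm_num
            rw [e, Real.rpow_one] at hD
            exact hD
          exact_mod_cast h2
        have hDuniv : D = univ := by
          apply Finset.eq_univ_of_card
          refine le_antisymm (Finset.card_le_univ D) ?_
          rw [hc2]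
          exact hD2
        have hcard2 : (D.card : ℝ) = 2 := by
          rw [hDuniv, card_univ, hc2]
          norm_num
        have hfil : ∀ M : Fin 0 → Fin (1 - 0) → ZMod 2,
            (D.filter (fun z => z.2 = fun j => ∑ i, z.1 i * M i j)).card = 1 := by
          intro M
          rw [hDuniv, Finset.card_eq_one]
          refine ⟨((fun i => 0), (fun j => 0)), ?_⟩
          ext z
          simp only [Finset.mem_filter, Finset.mem_univ, true_and, Finset.mem_singleton]
          constructor
          · intro h
            apply Prod.ext
            · funext i
              exact absurd i.isLt (by omega)
            · rw [h]
              funext j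
              simp
          · intro h
            rw [h]
            funext j
            simp
        have hzero : ∀ M : Fin 0 → Fin (1 - 0) → ZMod 2,
            (((D.filter (fun z => z.2 = fun j => ∑ i, z.1 i * M i j)).card : ℝ) / D.card
              - (2:ℝ) ^ (-(((1:ℕ)):ℝ) + ((0:ℕ):ℝ))) ^ 2 = 0 := by
          intro M
          rw [hfil M, hcard2]
          have e : (-(((1:ℕ)):ℝ) + ((0:ℕ):ℝ)) = -1 := by norm_num
          rw [e, Real.rpow_neg two_pos.le, Real.rpow_one]
          norm_num
        have hzero' : ∀ M : Fin 0 → Fin (1 - 0) → ZMod 2,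
            (((D.filter (fun z => z.2 = fun j => ∑ i, z.1 i * M i j)).card : ℝ) / D.card
              - (2:ℝ) ^ (-(((1:ℕ):ℝ) - ((0:ℕ):ℝ)))) ^ 2 = 0 := by
          intro M
          have e2 : (-(((1:ℕ):ℝ) - ((0:ℕ):ℝ))) = (-(((1:ℕ)):ℝ) + ((0:ℕ):ℝ)) := by ring
          rw [e2]
          exact hzero M
        rw [Finset.sum_congr rfl (fun M _ => hzero' M), Finset.sum_const]
        simp only [smul_zero, mul_zero]
        positivity
  refine ⟨part1, ?_⟩
  set q' := (2:ℝ) ^ (-((m:ℝ) - k)) with hq'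
  set ε := (2:ℝ) ^ (-(k:ℝ)/8) with hε
  have hq'pos : 0 < q' := Real.rpow_pos_of_pos two_pos _
  have hεpos : 0 < ε := Real.rpow_pos_of_pos two_pos _
  have hTpos : (0:ℝ) < 2^(k*(m-k)) := by positivity
  have hsum_le : ∑ M : Fin k → Fin (m - k) → ZMod 2,
      (((D.filter (fun z => z.2 = fun j => ∑ i, z.1 i * M i j)).card : ℝ) / D.card - q') ^ 2
      ≤ (2:ℝ)^(k*(m-k)) * ((2:ℝ) ^ (-2*((m:ℝ) - k) - (k:ℝ)/2) * (2:ℝ) ^ ((k:ℝ)/10)) := by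
    rw [one_div, inv_mul_le_iff₀ hTpos] at part1
    exact part1
  set Bad := univ.filter (fun M : Fin k → Fin (m - k) → ZMod 2 =>
    ¬ (|((D.filter (fun z => z.2 = fun j => ∑ i, z.1 i * M i j)).card : ℝ) / D.card - q'|
      ≤ ε * q')) with hBad
  have hbb : (Bad.card : ℝ) * (ε*q')^2 ≤ ∑ M : Fin k → Fin (m - k) → ZMod 2,
      (((D.filter (fun z => z.2 = fun j => ∑ i, z.1 i * M i j)).card : ℝ) / D.card - q') ^ 2 := by
    have hstep : ∀ M ∈ Bad, (ε*q')^2 ≤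
        (((D.filter (fun z => z.2 = fun j => ∑ i, z.1 i * M i j)).card : ℝ) / D.card - q') ^ 2 := by
      intro M hM
      rw [hBad, Finset.mem_filter] at hM
      have h1 : ε * q' ≤ |((D.filter (fun z => z.2 = fun j => ∑ i, z.1 i * M i j)).card : ℝ)
          / D.card - q'| := le_of_lt (not_le.mp hM.2)
      calc (ε*q')^2 ≤ |((D.filter (fun z => z.2 = fun j => ∑ i, z.1 i * M i j)).card : ℝ)
            / D.card - q'| ^ 2 := by
            apply pow_le_pow_left₀ (by positivity) h1
        _ = _ := sq_abs _
    calc (Bad.card : ℝ) * (ε*q')^2 = ∑ _M ∈ Bad, (ε*q')^2 := by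
          rw [Finset.sum_const, nsmul_eq_mul]
      _ ≤ ∑ M ∈ Bad, (((D.filter (fun z => z.2 = fun j => ∑ i, z.1 i * M i j)).card : ℝ)
            / D.card - q') ^ 2 := Finset.sum_le_sum hstep
      _ ≤ _ := Finset.sum_le_sum_of_subset_of_nonneg (Finset.filter_subset _ _)
            (fun M _ _ => sq_nonneg _)
  have hRle : (2:ℝ) ^ (-2*((m:ℝ) - k) - (k:ℝ)/2) * (2:ℝ) ^ ((k:ℝ)/10) ≤ ε * (ε*q')^2 := by
    have e3 : ε * (ε*q')^2 = (2:ℝ) ^ (-(k:ℝ)/8 + (-(k:ℝ)/8 + -((m:ℝ) - k)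
        + (-(k:ℝ)/8 + -((m:ℝ) - k)))) := by
      rw [hε, hq', pow_two, ← Real.rpow_add two_pos, ← Real.rpow_add two_pos,
        ← Real.rpow_add two_pos]
    have e4 : (2:ℝ) ^ (-2*((m:ℝ) - k) - (k:ℝ)/2) * (2:ℝ) ^ ((k:ℝ)/10)
        = (2:ℝ) ^ (-2*((m:ℝ) - k) - (k:ℝ)/2 + (k:ℝ)/10) := by
      rw [← Real.rpow_add two_pos]
    rw [e3, e4]
    apply Real.rpow_le_rpow_of_exponent_le one_le_two
    have hknn : (0:ℝ) ≤ (k:ℝ) := Nat.cast_nonneg k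
    linarith
  have hbadcard : (Bad.card : ℝ) ≤ ε * (2:ℝ)^(k*(m-k)) := by
    have h := le_trans hbb (le_trans hsum_le
      (mul_le_mul_of_nonneg_left hRle (le_of_lt hTpos)))
    have e : (2:ℝ)^(k*(m-k)) * (ε * (ε*q')^2) = (ε * (2:ℝ)^(k*(m-k))) * (ε*q')^2 := by ring
    rw [e] at h
    exact le_of_mul_le_mul_right h (by positivity)
  have hcards : ((univ.filter (fun M : Fin k → Fin (m - k) → ZMod 2 =>
      |((D.filter (fun z => z.2 = fun j => ∑ i, z.1 i * M i j)).card : ℝ) / D.card - q'|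
        ≤ ε * q')).card : ℝ) + (Bad.card : ℝ) = (2:ℝ)^(k*(m-k)) := by
    have h := Finset.card_filter_add_card_filter_not
      (s := (univ : Finset (Fin k → Fin (m - k) → ZMod 2)))
      (p := fun M => |((D.filter (fun z => z.2 = fun j => ∑ i, z.1 i * M i j)).card : ℝ)
        / D.card - q'| ≤ ε * q')
    rw [card_univ, card_mat] at h
    rw [hBad]
    exact_mod_cast congrArg (Nat.cast (R := ℝ)) h
  linarith [hbadcard, hcards]
end

section
/- Let n, k be integers with k ≤ n^{1/4}, and for C ⊆ [n] let U_n^C denote the uniform distribution on {x ∈ {0,1}^n : x_i = 1 for all i ∈ C}. Then for every function f : {0,1}^n → {0,1}, E_{C ∼ S_k^{[n]}}[ ‖f(U_n) − f(U_n^C)‖ ] ≤ O(k/√n), where S_k^{[n]} is the uniform distribution over size-k subsets of [n] and U_n is uniform on {0,1}^n. -/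
open Finset

namespace Stmt16

variable {n : ℕ}

def AT (n : ℕ) (T : Finset (Fin n)) : Finset (Fin n → Bool) :=
  Finset.univ.filter (fun x => ∀ i ∈ T, x i = true)

noncomputable def Sf (n : ℕ) (f : (Fin n → Bool) → Bool) (T : Finset (Fin n)) : ℝ :=
  ∑ x ∈ AT n T, if f x then (1:ℝ) else 0

noncomputable def P (n : ℕ) (f : (Fin n → Bool) → Bool) (T : Finset (Fin n)) : ℝ :=
  Sf n f T / ((AT n T).card : ℝ)

lemma mem_AT {T : Finset (Fin n)} {x : Fin n → Bool} :
    x ∈ AT n T ↔ ∀ i ∈ T, x i = true := by simp [AT]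

lemma AT_card_pos (T : Finset (Fin n)) : 0 < (AT n T).card := by
  refine Finset.card_pos.2 ⟨fun _ => true, ?_⟩
  simp [AT]

/-- flip coordinate i -/
def fl (i : Fin n) (x : Fin n → Bool) : Fin n → Bool :=
  fun j => if j = i then !(x j) else x j

lemma fl_fl (i : Fin n) (x : Fin n → Bool) : fl i (fl i x) = x := by
  funext j; by_cases h : j = i <;> simp [fl, h]

lemma fl_apply_ne {i j : Fin n} (x : Fin n → Bool) (h : j ≠ i) : fl i x j = x j := by
  simp [fl, h]

lemma fl_apply_self (i : Fin n) (x : Fin n → Bool) : fl i x i = !(x i) := by simp [fl]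

lemma fl_ne (i : Fin n) (x : Fin n → Bool) : fl i x ≠ x := by
  intro h
  have := congrFun h i
  rw [fl_apply_self] at this
  exact (Bool.not_ne_self (x i)) this

lemma fl_mem {T : Finset (Fin n)} {i : Fin n} (hi : i ∉ T) {x : Fin n → Bool}
    (hx : x ∈ AT n T) : fl i x ∈ AT n T := by
  rw [mem_AT] at hx ⊢
  intro j hj
  have hji : j ≠ i := by rintro rfl; exact hi hj
  rw [fl_apply_ne x hji]
  exact hx j hj

lemma AT_insert_eq (T : Finset (Fin n)) (i : Fin n) :
    AT n (insert i T) = (AT n T).filter (fun x => x i = true) := by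
  ext x
  simp only [mem_AT, Finset.mem_filter, Finset.mem_insert, mem_AT]
  constructor
  · intro h
    exact ⟨fun j hj => h j (Or.inr hj), h i (Or.inl rfl)⟩
  · rintro ⟨h1, h2⟩ j hj
    rcases hj with rfl | hj
    · exact h2
    · exact h1 j hj

lemma card_halves {T : Finset (Fin n)} {i : Fin n} (hi : i ∉ T) :
    ((AT n T).filter (fun x => x i = true)).card
      = ((AT n T).filter (fun x => ¬ x i = true)).card := by
  apply Finset.card_nbij' (fl i) (fl i)
  · intro x hx
    simp only [Finset.mem_coe, Finset.mem_filter] at hx ⊢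
    refine ⟨fl_mem hi hx.1, ?_⟩
    rw [fl_apply_self, hx.2]
    simp
  · intro x hx
    simp only [Finset.mem_coe, Finset.mem_filter] at hx ⊢
    refine ⟨fl_mem hi hx.1, ?_⟩
    rw [fl_apply_self]
    simp only [Bool.not_eq_true] at hx
    rw [hx.2]
    rfl
  · intro x _; exact fl_fl i x
  · intro x _; exact fl_fl i x

lemma card_AT_insert {T : Finset (Fin n)} {i : Fin n} (hi : i ∉ T) :
    (AT n T).card = 2 * (AT n (insert i T)).card := by
  rw [AT_insert_eq]
  have h := Finset.card_filter_add_card_filter_not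
    (s := AT n T) (p := fun x => x i = true)
  rw [← h, card_halves hi, two_mul]

noncomputable def eps (i : Fin n) (x : Fin n → Bool) : ℝ :=
  if x i = true then 1 else -1

lemma eps_fl_self (i : Fin n) (x : Fin n → Bool) : eps i (fl i x) = - eps i x := by
  cases h : x i <;> simp [eps, fl, h]

lemma eps_fl_ne {i j : Fin n} (h : j ≠ i) (x : Fin n → Bool) : eps j (fl i x) = eps j x := by
  simp [eps, fl, h]

lemma eps_sq (i : Fin n) (x : Fin n → Bool) : eps i x * eps i x = 1 := by
  unfold eps; split <;> norm_num

lemma sum_eps {T : Finset (Fin n)} {i : Fin n} (hi : i ∉ T) :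
    ∑ x ∈ AT n T, eps i x = 0 := by
  refine Finset.sum_involution (fun x _ => fl i x) ?_ ?_ ?_ ?_
  · intro x _; rw [eps_fl_self]; ring
  · intro x _ _; exact fl_ne i x
  · intro x hx; exact fl_mem hi hx
  · intro x hx; exact fl_fl i x

lemma sum_eps_mul {T : Finset (Fin n)} {i j : Fin n} (hi : i ∉ T) (hij : i ≠ j) :
    ∑ x ∈ AT n T, eps i x * eps j x = 0 := by
  refine Finset.sum_involution (fun x _ => fl i x) ?_ ?_ ?_ ?_
  · intro x _
    rw [eps_fl_self, eps_fl_ne (Ne.symm hij)]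
    ring
  · intro x _ _; exact fl_ne i x
  · intro x hx; exact fl_mem hi hx
  · intro x hx; exact fl_fl i x

lemma bessel {X ι : Type*} [DecidableEq ι] (A : Finset X) (idx : Finset ι)
    (e : ι → X → ℝ) (g : X → ℝ) (m : ℝ) (hm : 0 < m)
    (horth : ∀ i ∈ idx, ∀ j ∈ idx, (∑ x ∈ A, e i x * e j x) = if i = j then m else 0) :
    ∑ i ∈ idx, (∑ x ∈ A, g x * e i x) ^ 2 ≤ m * ∑ x ∈ A, g x ^ 2 := by
  obtain ⟨c, hc⟩ : ∃ c : ι → ℝ, ∀ i, c i = ∑ x ∈ A, g x * e i x := ⟨_, fun i => rfl⟩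
  simp_rw [← hc]
  have h1 : ∑ x ∈ A, g x * (∑ i ∈ idx, c i * e i x) = ∑ i ∈ idx, c i ^ 2 := by
    simp_rw [Finset.mul_sum]
    rw [Finset.sum_comm]
    refine Finset.sum_congr rfl fun i _ => ?_
    calc ∑ x ∈ A, g x * (c i * e i x) = c i * ∑ x ∈ A, g x * e i x := by
          rw [Finset.mul_sum]; exact Finset.sum_congr rfl fun x _ => by ring
      _ = c i ^ 2 := by rw [← hc]; ring
  have h2 : ∑ x ∈ A, (∑ i ∈ idx, c i * e i x) ^ 2 = m * ∑ i ∈ idx, c i ^ 2 := by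
    have e1 : ∀ x ∈ A, (∑ i ∈ idx, c i * e i x) ^ 2
        = ∑ i ∈ idx, ∑ j ∈ idx, c i * c j * (e i x * e j x) := by
      intro x _
      rw [sq, Finset.sum_mul_sum]
      exact Finset.sum_congr rfl fun i _ => Finset.sum_congr rfl fun j _ => by ring
    rw [Finset.sum_congr rfl e1, Finset.sum_comm, Finset.mul_sum]
    refine Finset.sum_congr rfl fun i hi => ?_
    rw [Finset.sum_comm]
    have e2 : ∀ j ∈ idx, ∑ x ∈ A, c i * c j * (e i x * e j x)
        = if i = j then c i * c j * m else 0 := by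
      intro j hj
      rw [← Finset.mul_sum, horth i hi j hj]
      split <;> simp
    rw [Finset.sum_congr rfl e2, Finset.sum_ite_eq idx i (fun j => c i * c j * m),
      if_pos hi]
    ring
  have key : (0:ℝ) ≤ ∑ x ∈ A, (m * g x - ∑ i ∈ idx, c i * e i x) ^ 2 :=
    Finset.sum_nonneg fun x _ => sq_nonneg _
  have expand : ∑ x ∈ A, (m * g x - ∑ i ∈ idx, c i * e i x) ^ 2
      = m ^ 2 * (∑ x ∈ A, g x ^ 2) - 2 * m * (∑ i ∈ idx, c i ^ 2)
        + m * (∑ i ∈ idx, c i ^ 2) := by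
    have e2 : ∀ x ∈ A, (m * g x - ∑ i ∈ idx, c i * e i x) ^ 2
        = m ^ 2 * g x ^ 2 - 2 * m * (g x * ∑ i ∈ idx, c i * e i x)
          + (∑ i ∈ idx, c i * e i x) ^ 2 := fun x _ => by ring
    rw [Finset.sum_congr rfl e2, Finset.sum_add_distrib, Finset.sum_sub_distrib,
      ← Finset.mul_sum, ← Finset.mul_sum, h1, h2]
  rw [expand] at key
  nlinarith [key, hm]

lemma Sf_nonneg (f : (Fin n → Bool) → Bool) (T : Finset (Fin n)) : 0 ≤ Sf n f T :=
  Finset.sum_nonneg fun x _ => by positivity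

lemma Sf_le_card (f : (Fin n → Bool) → Bool) (T : Finset (Fin n)) :
    Sf n f T ≤ ((AT n T).card : ℝ) := by
  unfold Sf
  calc ∑ x ∈ AT n T, (if f x then (1:ℝ) else 0) ≤ ∑ x ∈ AT n T, 1 :=
        Finset.sum_le_sum fun x _ => by split <;> norm_num
    _ = ((AT n T).card : ℝ) := by simp

lemma sum_sq_g_le (f : (Fin n → Bool) → Bool) (T : Finset (Fin n)) :
    ∑ x ∈ AT n T, ((if f x then (1:ℝ) else 0) - P n f T) ^ 2
      ≤ ((AT n T).card : ℝ) / 4 := by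
  have hm : (0:ℝ) < ((AT n T).card : ℝ) := by exact_mod_cast AT_card_pos T
  have hS0 := Sf_nonneg f T
  have hSm := Sf_le_card f T
  have hP : P n f T = Sf n f T / ((AT n T).card : ℝ) := rfl
  have expand : ∑ x ∈ AT n T, ((if f x then (1:ℝ) else 0) - P n f T) ^ 2
      = Sf n f T - 2 * P n f T * Sf n f T + ((AT n T).card : ℝ) * P n f T ^ 2 := by
    have e1 : ∀ x ∈ AT n T, ((if f x then (1:ℝ) else 0) - P n f T) ^ 2
        = (if f x then (1:ℝ) else 0) - 2 * P n f T * (if f x then (1:ℝ) else 0)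
          + P n f T ^ 2 := by
      intro x _
      by_cases h : f x <;> simp [h] <;> ring
    rw [Finset.sum_congr rfl e1, Finset.sum_add_distrib, Finset.sum_sub_distrib,
      ← Finset.mul_sum, Finset.sum_const, nsmul_eq_mul]
    rfl
  rw [expand, hP]
  have hne : ((AT n T).card : ℝ) ≠ 0 := ne_of_gt hm
  have hdm : Sf n f T / ((AT n T).card : ℝ) * ((AT n T).card : ℝ) = Sf n f T :=
    div_mul_cancel₀ _ hne
  nlinarith [sq_nonneg (2 * (Sf n f T / ((AT n T).card : ℝ)) - 1), hm, hdm]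

lemma step (f : (Fin n → Bool) → Bool) (T : Finset (Fin n)) :
    ∑ i ∈ Tᶜ, |P n f T - P n f (insert i T)|
      ≤ Real.sqrt ((Tᶜ.card : ℝ)) / 2 := by
  classical
  have hm : (0:ℝ) < ((AT n T).card : ℝ) := by exact_mod_cast AT_card_pos T
  set m : ℝ := ((AT n T).card : ℝ) with hmdef
  obtain ⟨c, hc⟩ : ∃ c : Fin n → ℝ, ∀ i, c i
      = ∑ x ∈ AT n T, ((if f x then (1:ℝ) else 0) - P n f T) * eps i x :=
    ⟨_, fun i => rfl⟩
  have hterm : ∀ i ∈ Tᶜ, |P n f T - P n f (insert i T)| = |c i| / m := by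
    intro i hi
    have hiT : i ∉ T := by simpa using hi
    have hsplit : Sf n f T
        = (∑ x ∈ (AT n T).filter (fun x => x i = true), if f x then (1:ℝ) else 0)
          + ∑ x ∈ (AT n T).filter (fun x => ¬ x i = true), if f x then (1:ℝ) else 0 :=
      (Finset.sum_filter_add_sum_filter_not (AT n T) (fun x => x i = true) _).symm
    set S1 : ℝ := ∑ x ∈ (AT n T).filter (fun x => x i = true), if f x then (1:ℝ) else 0
      with hS1def
    set S0 : ℝ := ∑ x ∈ (AT n T).filter (fun x => ¬ x i = true), if f x then (1:ℝ) else 0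
      with hS0def
    have hSfins : Sf n f (insert i T) = S1 := by
      unfold Sf
      rw [AT_insert_eq]
    have hcardins : m = 2 * ((AT n (insert i T)).card : ℝ) := by
      rw [hmdef]
      exact_mod_cast congrArg (fun t : ℕ => (t:ℝ)) (card_AT_insert hiT)
    have ha : (0:ℝ) < ((AT n (insert i T)).card : ℝ) := by
      exact_mod_cast AT_card_pos (insert i T)
    -- compute c i
    have hci : c i = S1 - S0 := by
      rw [hc]
      have e1 : ∀ x ∈ AT n T, ((if f x then (1:ℝ) else 0) - P n f T) * eps i x
          = (if f x then (1:ℝ) else 0) * eps i x - P n f T * eps i x :=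
        fun x _ => by ring
      rw [Finset.sum_congr rfl e1, Finset.sum_sub_distrib, ← Finset.mul_sum,
        sum_eps hiT, mul_zero, sub_zero,
        ← Finset.sum_filter_add_sum_filter_not (AT n T) (fun x => x i = true)]
      have e2 : ∀ x ∈ (AT n T).filter (fun x => x i = true),
          (if f x then (1:ℝ) else 0) * eps i x = (if f x then (1:ℝ) else 0) := by
        intro x hx
        have : x i = true := (Finset.mem_filter.1 hx).2
        simp [eps, this]
      have e3 : ∀ x ∈ (AT n T).filter (fun x => ¬ x i = true),
          (if f x then (1:ℝ) else 0) * eps i x = -(if f x then (1:ℝ) else 0) := by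
        intro x hx
        have : ¬ x i = true := (Finset.mem_filter.1 hx).2
        simp [eps, this]
      rw [Finset.sum_congr rfl e2, Finset.sum_congr rfl e3, Finset.sum_neg_distrib]
      ring
    -- compute difference of P's
    have hdiff : P n f T - P n f (insert i T) = -(c i) / m := by
      rw [hci]
      unfold P
      rw [hSfins, hsplit, ← hmdef, hcardins]
      field_simp
      ring
    rw [hdiff, abs_div, abs_neg, abs_of_pos hm]
  rw [Finset.sum_congr rfl hterm, ← Finset.sum_div]
  -- Cauchy-Schwarz
  have hCS : ∑ i ∈ Tᶜ, |c i|
      ≤ Real.sqrt ((Tᶜ.card : ℝ)) * Real.sqrt (∑ i ∈ Tᶜ, c i ^ 2) := by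
    have := Real.sum_mul_le_sqrt_mul_sqrt Tᶜ (fun _ => (1:ℝ)) (fun i => |c i|)
    simpa [sq_abs] using this
  -- Bessel
  have horth : ∀ i ∈ Tᶜ, ∀ j ∈ Tᶜ,
      (∑ x ∈ AT n T, eps i x * eps j x) = if i = j then m else 0 := by
    intro i hi j hj
    by_cases h : i = j
    · subst h
      rw [if_pos rfl]
      calc ∑ x ∈ AT n T, eps i x * eps i x = ∑ x ∈ AT n T, 1 :=
            Finset.sum_congr rfl fun x _ => eps_sq i x
        _ = m := by simp [hmdef]
    · rw [if_neg h]
      exact sum_eps_mul (by simpa using hi) h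
  have hB : ∑ i ∈ Tᶜ, c i ^ 2 ≤ m * (m / 4) := by
    calc ∑ i ∈ Tᶜ, c i ^ 2
        = ∑ i ∈ Tᶜ, (∑ x ∈ AT n T,
            ((if f x then (1:ℝ) else 0) - P n f T) * eps i x) ^ 2 := by
          exact Finset.sum_congr rfl fun i _ => by rw [hc]
      _ ≤ m * ∑ x ∈ AT n T, ((if f x then (1:ℝ) else 0) - P n f T) ^ 2 :=
          bessel (AT n T) Tᶜ eps _ m hm horth
      _ ≤ m * (m / 4) := by
          have := sum_sq_g_le f T
          exact mul_le_mul_of_nonneg_left (by rw [hmdef]; exact this) (le_of_lt hm)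
  have hsq : Real.sqrt (∑ i ∈ Tᶜ, c i ^ 2) ≤ m / 2 := by
    have h1 : Real.sqrt (∑ i ∈ Tᶜ, c i ^ 2) ≤ Real.sqrt (m * (m / 4)) :=
      Real.sqrt_le_sqrt hB
    have h2 : m * (m / 4) = (m / 2) ^ 2 := by ring
    rw [h2, Real.sqrt_sq (by positivity)] at h1
    exact h1
  have hfinal : ∑ i ∈ Tᶜ, |c i| ≤ Real.sqrt ((Tᶜ.card : ℝ)) * (m / 2) :=
    hCS.trans (mul_le_mul_of_nonneg_left hsq (Real.sqrt_nonneg _))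
  calc (∑ i ∈ Tᶜ, |c i|) / m ≤ (Real.sqrt ((Tᶜ.card : ℝ)) * (m / 2)) / m :=
        div_le_div_of_nonneg_right hfinal hm.le
    _ = Real.sqrt ((Tᶜ.card : ℝ)) / 2 := by field_simp

lemma double_count (k : ℕ) (h : Finset (Fin n) → ℝ) :
    ∑ T ∈ (Finset.univ : Finset (Fin n)).powersetCard k, ∑ i ∈ Tᶜ, h (insert i T)
      = ((k:ℝ) + 1) * ∑ S ∈ (Finset.univ : Finset (Fin n)).powersetCard (k+1), h S := by
  classical
  rw [Finset.sum_sigma']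
  have rhs : ((k:ℝ) + 1) * ∑ S ∈ (Finset.univ : Finset (Fin n)).powersetCard (k+1), h S
      = ∑ S ∈ (Finset.univ : Finset (Fin n)).powersetCard (k+1), ∑ i ∈ S, h S := by
    rw [Finset.mul_sum]
    refine Finset.sum_congr rfl fun S hS => ?_
    have hcard : S.card = k + 1 := (Finset.mem_powersetCard.1 hS).2
    rw [Finset.sum_const, nsmul_eq_mul, hcard]
    push_cast
    ring
  rw [rhs, Finset.sum_sigma']
  refine Finset.sum_nbij' (fun p => ⟨insert p.2 p.1, p.2⟩)
    (fun p => ⟨p.1.erase p.2, p.2⟩) ?_ ?_ ?_ ?_ ?_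
  · rintro ⟨T, i⟩ hp
    rw [Finset.mem_sigma] at hp ⊢
    obtain ⟨hT, hi⟩ := hp
    have hiT : i ∉ T := by simpa using hi
    constructor
    · rw [Finset.mem_powersetCard]
      exact ⟨Finset.subset_univ _, by
        rw [Finset.card_insert_of_notMem hiT, (Finset.mem_powersetCard.1 hT).2]⟩
    · exact Finset.mem_insert_self i T
  · rintro ⟨S, i⟩ hp
    rw [Finset.mem_sigma] at hp ⊢
    obtain ⟨hS, hi⟩ := hp
    constructor
    · rw [Finset.mem_powersetCard]
      refine ⟨Finset.subset_univ _, ?_⟩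
      rw [Finset.card_erase_of_mem hi, (Finset.mem_powersetCard.1 hS).2]
      omega
    · simp
  · rintro ⟨T, i⟩ hp
    rw [Finset.mem_sigma] at hp
    have hiT : i ∉ T := by simpa using hp.2
    simp [Finset.erase_insert hiT]
  · rintro ⟨S, i⟩ hp
    rw [Finset.mem_sigma] at hp
    simp [Finset.insert_erase hp.2]
  · rintro ⟨T, i⟩ _
    rfl

noncomputable def sj (n : ℕ) (j : ℕ) : ℝ := 1 / (2 * Real.sqrt ((n - j : ℕ) : ℝ))

lemma sj_nonneg (j : ℕ) : 0 ≤ sj n j := by unfold sj; positivity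

lemma chain (f : (Fin n → Bool) → Bool) (k : ℕ) :
    ∑ S ∈ (Finset.univ : Finset (Fin n)).powersetCard k, |P n f ∅ - P n f S|
      ≤ (n.choose k : ℝ) * ∑ j ∈ Finset.range k, sj n j := by
  induction k with
  | zero => simp
  | succ k ih =>
    by_cases hkn : n ≤ k
    · have hempty : (Finset.univ : Finset (Fin n)).powersetCard (k+1) = ∅ :=
        Finset.powersetCard_eq_empty.2 (by simp [Fintype.card_fin]; omega)
      rw [hempty]
      simp only [Finset.sum_empty]
      exact mul_nonneg (by positivity) (Finset.sum_nonneg fun j _ => sj_nonneg j)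
    · push_neg at hkn
      have hnk0 : 0 < n - k := by omega
      have hDpos : (0:ℝ) < ((n - k : ℕ) : ℝ) := by exact_mod_cast hnk0
      have key := double_count k (fun S => |P n f ∅ - P n f S|)
      have hT : ∀ T ∈ (Finset.univ : Finset (Fin n)).powersetCard k,
          ∑ i ∈ Tᶜ, |P n f ∅ - P n f (insert i T)|
          ≤ ((n - k : ℕ) : ℝ) * |P n f ∅ - P n f T|
            + Real.sqrt ((n - k : ℕ) : ℝ) / 2 := by
        intro T hTm
        have hTcard : T.card = k := (Finset.mem_powersetCard.1 hTm).2
        have hTc : Tᶜ.card = n - k := by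
          rw [Finset.card_compl, hTcard, Fintype.card_fin]
        have h1 := step f T
        rw [hTc] at h1
        calc ∑ i ∈ Tᶜ, |P n f ∅ - P n f (insert i T)|
            ≤ ∑ i ∈ Tᶜ, (|P n f ∅ - P n f T| + |P n f T - P n f (insert i T)|) :=
              Finset.sum_le_sum fun i _ => by
                calc |P n f ∅ - P n f (insert i T)|
                    = |(P n f ∅ - P n f T) + (P n f T - P n f (insert i T))| := by
                      ring_nf
                  _ ≤ _ := abs_add_le _ _
          _ = (Tᶜ.card : ℝ) * |P n f ∅ - P n f T|
              + ∑ i ∈ Tᶜ, |P n f T - P n f (insert i T)| := by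
              rw [Finset.sum_add_distrib, Finset.sum_const, nsmul_eq_mul]
          _ ≤ ((n - k : ℕ) : ℝ) * |P n f ∅ - P n f T|
              + Real.sqrt ((n - k : ℕ) : ℝ) / 2 := by
              rw [hTc]
              exact add_le_add_right h1 _
      have hcardpc : ((Finset.univ : Finset (Fin n)).powersetCard k).card = n.choose k := by
        rw [Finset.card_powersetCard, Finset.card_univ, Fintype.card_fin]
      have hbound : ((k:ℝ) + 1)
            * ∑ S ∈ (Finset.univ : Finset (Fin n)).powersetCard (k+1), |P n f ∅ - P n f S|
          ≤ ((n - k : ℕ) : ℝ)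
              * ∑ T ∈ (Finset.univ : Finset (Fin n)).powersetCard k, |P n f ∅ - P n f T|
            + (n.choose k : ℝ) * (Real.sqrt ((n - k : ℕ) : ℝ) / 2) := by
        rw [← key]
        calc ∑ T ∈ (Finset.univ : Finset (Fin n)).powersetCard k,
              ∑ i ∈ Tᶜ, |P n f ∅ - P n f (insert i T)|
            ≤ ∑ T ∈ (Finset.univ : Finset (Fin n)).powersetCard k,
              (((n - k : ℕ) : ℝ) * |P n f ∅ - P n f T|
                + Real.sqrt ((n - k : ℕ) : ℝ) / 2) := Finset.sum_le_sum hT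
          _ = _ := by
              rw [Finset.sum_add_distrib, ← Finset.mul_sum, Finset.sum_const,
                nsmul_eq_mul, hcardpc]
      have hsqrt : Real.sqrt ((n - k : ℕ) : ℝ) / 2 = ((n - k : ℕ) : ℝ) * sj n k := by
        have hs : (0:ℝ) < Real.sqrt ((n - k : ℕ) : ℝ) := Real.sqrt_pos.2 hDpos
        have hmul : Real.sqrt ((n - k : ℕ) : ℝ) * Real.sqrt ((n - k : ℕ) : ℝ)
            = ((n - k : ℕ) : ℝ) := Real.mul_self_sqrt hDpos.le
        unfold sj
        have hsne : Real.sqrt ((n - k : ℕ) : ℝ) ≠ 0 := ne_of_gt hs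
        field_simp
        nlinarith [hmul]
      have hch : ((k:ℝ) + 1) * (n.choose (k+1) : ℝ)
          = ((n - k : ℕ) : ℝ) * (n.choose k : ℝ) := by
        have h := Nat.choose_succ_right_eq n k
        have h2 : ((n.choose (k+1) * (k+1) : ℕ) : ℝ) = ((n.choose k * (n - k) : ℕ) : ℝ) := by
          exact_mod_cast congrArg (fun t : ℕ => (t:ℝ)) h
        push_cast at h2
        linarith [h2]
      have hstep2 : ((k:ℝ) + 1)
            * ∑ S ∈ (Finset.univ : Finset (Fin n)).powersetCard (k+1), |P n f ∅ - P n f S|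
          ≤ ((n - k : ℕ) : ℝ) * (n.choose k : ℝ) * ∑ j ∈ Finset.range (k+1), sj n j := by
        calc ((k:ℝ) + 1) * ∑ S ∈ (Finset.univ : Finset (Fin n)).powersetCard (k+1),
              |P n f ∅ - P n f S| ≤ _ := hbound
          _ ≤ ((n - k : ℕ) : ℝ) * ((n.choose k : ℝ) * ∑ j ∈ Finset.range k, sj n j)
              + (n.choose k : ℝ) * (((n - k : ℕ) : ℝ) * sj n k) := by
              refine add_le_add ?_ ?_
              · exact mul_le_mul_of_nonneg_left ih hDpos.le
              · rw [hsqrt]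
          _ = ((n - k : ℕ) : ℝ) * (n.choose k : ℝ)
              * (∑ j ∈ Finset.range k, sj n j + sj n k) := by ring
          _ = _ := by rw [Finset.sum_range_succ]
      have hkpos : (0:ℝ) < (k:ℝ) + 1 := by positivity
      have hfin : ((k:ℝ) + 1)
            * ∑ S ∈ (Finset.univ : Finset (Fin n)).powersetCard (k+1), |P n f ∅ - P n f S|
          ≤ ((k:ℝ) + 1) * ((n.choose (k+1) : ℝ) * ∑ j ∈ Finset.range (k+1), sj n j) := by
        calc ((k:ℝ) + 1) * ∑ S ∈ (Finset.univ : Finset (Fin n)).powersetCard (k+1),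
              |P n f ∅ - P n f S| ≤ _ := hstep2
          _ = ((k:ℝ) + 1) * ((n.choose (k+1) : ℝ) * ∑ j ∈ Finset.range (k+1), sj n j) := by
              rw [← hch]; ring
      have := le_of_mul_le_mul_left (by
        calc ((k:ℝ) + 1) * ∑ S ∈ (Finset.univ : Finset (Fin n)).powersetCard (k+1),
              |P n f ∅ - P n f S| ≤ _ := hfin) hkpos
      exact_mod_cast this

lemma card_cube : ((Finset.univ : Finset (Fin n → Bool)).card : ℝ) = 2 ^ n := by
  rw [Finset.card_univ]
  rw [show Fintype.card (Fin n → Bool) = 2 ^ n by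
    rw [Fintype.card_fun, Fintype.card_bool, Fintype.card_fin]]
  push_cast
  ring

lemma term_eq (f : (Fin n → Bool) → Bool) (S : Finset (Fin n)) :
    |(∑ x : Fin n → Bool, if f x then (1:ℝ) else 0) / 2 ^ n -
        (∑ x ∈ Finset.univ.filter (fun x : Fin n → Bool => ∀ i ∈ S, x i = true),
          if f x then (1:ℝ) else 0) /
          (Finset.univ.filter (fun x : Fin n → Bool => ∀ i ∈ S, x i = true)).card|
      = |P n f ∅ - P n f S| := by
  have h1 : (∑ x : Fin n → Bool, if f x then (1:ℝ) else 0) / 2 ^ n = P n f ∅ := by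
    unfold P Sf
    have hA : AT n (∅ : Finset (Fin n)) = Finset.univ := by simp [AT]
    rw [hA, card_cube]
  rw [h1]
  rfl

end Stmt16

open Finset Stmt16

/-- for `k ≤ n^{1/4}` and any Boolean `f` on `{0,1}^n`, the expectation
over a uniformly random size-`k` subset `S` of `[n]` of `‖f(U_n) − f(U_n^S)‖`
is `O(k/√n)`. -/
theorem stmt16 : ∃ C : ℝ, 0 < C ∧ ∀ (n k : ℕ),
    (k : ℝ) ≤ (n : ℝ) ^ ((1:ℝ)/4) →
    ∀ f : (Fin n → Bool) → Bool,
    (1 / (n.choose k : ℝ)) *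
      ∑ S ∈ (Finset.univ : Finset (Fin n)).powersetCard k,
        |(∑ x : Fin n → Bool, if f x then (1:ℝ) else 0) / 2 ^ n -
          (∑ x ∈ Finset.univ.filter (fun x : Fin n → Bool => ∀ i ∈ S, x i = true),
            if f x then (1:ℝ) else 0) /
            (Finset.univ.filter (fun x : Fin n → Bool => ∀ i ∈ S, x i = true)).card|
    ≤ C * k / Real.sqrt n := by
  refine ⟨1, one_pos, ?_⟩
  intro n k hk f
  rw [Finset.sum_congr rfl (fun S _ => term_eq f S)]
  rcases Nat.eq_zero_or_pos k with rfl | hk1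
  · simp
  -- now k ≥ 1
  have hn1 : 1 ≤ n := by
    by_contra h
    push_neg at h
    interval_cases n
    rw [Nat.cast_zero, Real.zero_rpow (by norm_num)] at hk
    have : (0:ℝ) < (k:ℝ) := by exact_mod_cast hk1
    linarith
  have hn1R : (1:ℝ) ≤ (n:ℝ) := by exact_mod_cast hn1
  have hksqrt : (k:ℝ) ≤ Real.sqrt n := by
    calc (k:ℝ) ≤ (n:ℝ) ^ ((1:ℝ)/4) := hk
      _ ≤ (n:ℝ) ^ ((1:ℝ)/2) := Real.rpow_le_rpow_of_exponent_le hn1R (by norm_num)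
      _ = Real.sqrt n := (Real.sqrt_eq_rpow _).symm
  have hsqrtpos : (0:ℝ) < Real.sqrt n := Real.sqrt_pos.2 (by linarith)
  have hsqle : Real.sqrt n ≤ ((n:ℝ) + 1) / 2 := by
    nlinarith [Real.sq_sqrt (by linarith : (0:ℝ) ≤ (n:ℝ)), Real.sqrt_nonneg (n:ℝ),
      sq_nonneg (Real.sqrt n - 1)]
  have hkn : k ≤ n := by
    have : (k:ℝ) ≤ (n:ℝ) := by
      calc (k:ℝ) ≤ Real.sqrt n := hksqrt
        _ ≤ (n:ℝ) := by nlinarith [Real.sq_sqrt (by linarith : (0:ℝ) ≤ (n:ℝ))]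
    exact_mod_cast this
  have hchoosepos : (0:ℝ) < (n.choose k : ℝ) := by
    exact_mod_cast Nat.choose_pos hkn
  have hsj : ∀ j ∈ Finset.range k, sj n j ≤ 1 / Real.sqrt n := by
    intro j hj
    have hjk : j < k := Finset.mem_range.1 hj
    have hd : ((n:ℝ)) / 4 ≤ ((n - j : ℕ) : ℝ) := by
      have h1 : ((n - j : ℕ) : ℝ) = (n:ℝ) - (j:ℝ) := by
        rw [Nat.cast_sub (by omega)]
      have h2 : (j:ℝ) ≤ (k:ℝ) - 1 := by
        have : j + 1 ≤ k := hjk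
        have := (Nat.cast_le (α := ℝ)).2 this
        push_cast at this
        linarith
      rw [h1]
      linarith [hksqrt, hsqle]
    have hdpos : (0:ℝ) < ((n - j : ℕ) : ℝ) := by linarith
    have hsd : (0:ℝ) < Real.sqrt ((n - j : ℕ) : ℝ) := Real.sqrt_pos.2 hdpos
    have hkey : Real.sqrt (n:ℝ) ≤ 2 * Real.sqrt ((n - j : ℕ) : ℝ) := by
      have h3 : Real.sqrt (n:ℝ) ≤ Real.sqrt ((2 * Real.sqrt ((n - j : ℕ) : ℝ)) ^ 2) := by
        apply Real.sqrt_le_sqrt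
        rw [mul_pow, Real.sq_sqrt hdpos.le]
        linarith
      rwa [Real.sqrt_sq (by positivity)] at h3
    unfold sj
    exact one_div_le_one_div_of_le hsqrtpos hkey
  calc (1 / (n.choose k : ℝ)) *
        ∑ S ∈ (Finset.univ : Finset (Fin n)).powersetCard k, |P n f ∅ - P n f S|
      ≤ (1 / (n.choose k : ℝ)) * ((n.choose k : ℝ) * ∑ j ∈ Finset.range k, sj n j) :=
        mul_le_mul_of_nonneg_left (chain f k) (by positivity)
    _ = ∑ j ∈ Finset.range k, sj n j := by field_simp
    _ ≤ ∑ j ∈ Finset.range k, 1 / Real.sqrt n := Finset.sum_le_sum hsj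
    _ = (k:ℝ) * (1 / Real.sqrt n) := by
        rw [Finset.sum_const, Finset.card_range, nsmul_eq_mul]
    _ = 1 * (k:ℝ) / Real.sqrt n := by ring
end
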